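/- arXiv:0907.0026 — 8 statements merged into one kernel-verified Lean document; each statement's English description precedes it below -/
import Mathlib

section
/- In the kernel-map RKHS setup with dense span, fix ℓ ∈ Fin m and a constant c > 0. Then the following are equivalent: (i) there exists a bounded operator T : H →L[ℂ] H with ‖T‖ ≤ c such that T (κ w x) = conj(w_ℓ) • (κ w x) for all w ∈ Ω and x ∈ E₀; (ii) the kernel (z, w) ↦ (c² − z_ℓ · conj(w_ℓ)) • K z w is nonnegative definite. Consequently, when such a T exists, its adjoint T* is the bounded ℓ-th coordinate multiplication operator M_ℓ on H, and ‖T‖ (= ‖M_ℓ‖) is the smallest c > 0 for which (ii) holds. -/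
open scoped ComplexOrder

/-- A kernel `G : Ω → Ω → (E₀ →L[ℂ] E₀)` is *nonnegative definite*. -/
def IsNNDKernel {Ω E₀ : Type*} [NormedAddCommGroup E₀] [InnerProductSpace ℂ E₀]
    (G : Ω → Ω → (E₀ →L[ℂ] E₀)) : Prop :=
  ∀ (p : ℕ) (w : Fin p → Ω) (ζ : Fin p → E₀),
    0 ≤ ∑ i : Fin p, ∑ j : Fin p, (inner ℂ (G (w j) (w i) (ζ i)) (ζ j) : ℂ)

local notation "⟪" x ", " y "⟫" => @inner ℂ _ _ x y

lemma key_sum {m : ℕ} {Ω : Set (Fin m → ℂ)}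
    {E₀ H : Type*} [NormedAddCommGroup E₀] [InnerProductSpace ℂ E₀] [CompleteSpace E₀]
    [NormedAddCommGroup H] [InnerProductSpace ℂ H] [CompleteSpace H]
    (κ : Ω → (E₀ →L[ℂ] H))
    (K : Ω → Ω → (E₀ →L[ℂ] E₀))
    (hK : ∀ z w : Ω, K z w = (ContinuousLinearMap.adjoint (κ z)).comp (κ w))
    (ℓ : Fin m) (c' : ℝ) (p : ℕ) (w : Fin p → Ω) (ζ : Fin p → E₀) :
    ∑ i : Fin p, ∑ j : Fin p,
      ⟪(((c' : ℂ) ^ 2 - (w j : Fin m → ℂ) ℓ * (starRingEnd ℂ) ((w i : Fin m → ℂ) ℓ))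
          • K (w j) (w i)) (ζ i), (ζ j)⟫
    = (c' : ℂ) ^ 2 * ⟪∑ i : Fin p, κ (w i) (ζ i), ∑ i : Fin p, κ (w i) (ζ i)⟫
      - ⟪∑ i : Fin p, (starRingEnd ℂ) ((w i : Fin m → ℂ) ℓ) • κ (w i) (ζ i),
         ∑ i : Fin p, (starRingEnd ℂ) ((w i : Fin m → ℂ) ℓ) • κ (w i) (ζ i)⟫ := by
  simp only [hK, ContinuousLinearMap.smul_apply, ContinuousLinearMap.comp_apply,
    inner_smul_left, ContinuousLinearMap.adjoint_inner_left,
    sum_inner, inner_sum, inner_smul_right, Finset.mul_sum, Finset.sum_sub_distrib,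
    map_sub, map_mul, map_pow, Complex.conj_conj, Complex.conj_ofReal]
  rw [← Finset.sum_sub_distrib, Finset.sum_comm]
  refine Finset.sum_congr rfl fun i _ => ?_
  rw [← Finset.sum_sub_distrib]
  refine Finset.sum_congr rfl fun j _ => ?_
  ring

lemma nnd_iff {m : ℕ} {Ω : Set (Fin m → ℂ)}
    {E₀ H : Type*} [NormedAddCommGroup E₀] [InnerProductSpace ℂ E₀] [CompleteSpace E₀]
    [NormedAddCommGroup H] [InnerProductSpace ℂ H] [CompleteSpace H]
    (κ : Ω → (E₀ →L[ℂ] H))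
    (K : Ω → Ω → (E₀ →L[ℂ] E₀))
    (hK : ∀ z w : Ω, K z w = (ContinuousLinearMap.adjoint (κ z)).comp (κ w))
    (ℓ : Fin m) (c' : ℝ) (hc' : 0 ≤ c') :
    (∀ (p : ℕ) (w : Fin p → Ω) (ζ : Fin p → E₀),
      0 ≤ ∑ i : Fin p, ∑ j : Fin p,
        ⟪(((c' : ℂ) ^ 2 - (w j : Fin m → ℂ) ℓ * (starRingEnd ℂ) ((w i : Fin m → ℂ) ℓ))
            • K (w j) (w i)) (ζ i), (ζ j)⟫) ↔
    (∀ (p : ℕ) (w : Fin p → Ω) (ζ : Fin p → E₀),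
      ‖∑ i : Fin p, (starRingEnd ℂ) ((w i : Fin m → ℂ) ℓ) • κ (w i) (ζ i)‖
        ≤ c' * ‖∑ i : Fin p, κ (w i) (ζ i)‖) := by
  have main : ∀ (p : ℕ) (w : Fin p → Ω) (ζ : Fin p → E₀),
      (0 ≤ ∑ i : Fin p, ∑ j : Fin p,
        ⟪(((c' : ℂ) ^ 2 - (w j : Fin m → ℂ) ℓ * (starRingEnd ℂ) ((w i : Fin m → ℂ) ℓ))
            • K (w j) (w i)) (ζ i), (ζ j)⟫) ↔
      ‖∑ i : Fin p, (starRingEnd ℂ) ((w i : Fin m → ℂ) ℓ) • κ (w i) (ζ i)‖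
        ≤ c' * ‖∑ i : Fin p, κ (w i) (ζ i)‖ := by
    intro p w ζ
    rw [key_sum κ K hK ℓ c' p w ζ]
    set h := ∑ i : Fin p, κ (w i) (ζ i)
    set g := ∑ i : Fin p, (starRingEnd ℂ) ((w i : Fin m → ℂ) ℓ) • κ (w i) (ζ i)
    rw [inner_self_eq_norm_sq_to_K, inner_self_eq_norm_sq_to_K]
    show 0 ≤ (c' : ℂ) ^ 2 * (Complex.ofReal ‖h‖) ^ 2 - (Complex.ofReal ‖g‖) ^ 2 ↔ _
    rw [show (c' : ℂ) ^ 2 * (Complex.ofReal ‖h‖) ^ 2 - (Complex.ofReal ‖g‖) ^ 2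
        = (((c' * ‖h‖) ^ 2 - ‖g‖ ^ 2 : ℝ) : ℂ) from by push_cast; ring]
    rw [Complex.zero_le_real, sub_nonneg]
    exact (pow_le_pow_iff_left₀ (norm_nonneg _) (by positivity) two_ne_zero)
  exact forall₃_congr main

lemma exists_T {m : ℕ} {Ω : Set (Fin m → ℂ)}
    {E₀ H : Type*} [NormedAddCommGroup E₀] [InnerProductSpace ℂ E₀] [CompleteSpace E₀]
    [NormedAddCommGroup H] [InnerProductSpace ℂ H] [CompleteSpace H]
    (κ : Ω → (E₀ →L[ℂ] H))
    (hdense : Dense (↑(Submodule.span ℂ (⋃ w : Ω, Set.range (κ w))) : Set H))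
    (ℓ : Fin m) (c' : ℝ) (hc' : 0 < c')
    (hbd : ∀ (p : ℕ) (w : Fin p → Ω) (ζ : Fin p → E₀),
      ‖∑ i : Fin p, (starRingEnd ℂ) ((w i : Fin m → ℂ) ℓ) • κ (w i) (ζ i)‖
        ≤ c' * ‖∑ i : Fin p, κ (w i) (ζ i)‖) :
    ∃ T : H →L[ℂ] H, ‖T‖ ≤ c' ∧ ∀ (w : Ω) (x : E₀),
      T (κ w x) = (starRingEnd ℂ) ((w : Fin m → ℂ) ℓ) • κ w x := by
  classical
  set v : Ω × E₀ → H := fun q => κ q.1 q.2 with hv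
  set u : Ω × E₀ → H := fun q => (starRingEnd ℂ) ((q.1 : Fin m → ℂ) ℓ) • κ q.1 q.2 with hu
  set Φ : ((Ω × E₀) →₀ ℂ) →ₗ[ℂ] H := Finsupp.linearCombination ℂ v with hΦ
  set Ψ : ((Ω × E₀) →₀ ℂ) →ₗ[ℂ] H := Finsupp.linearCombination ℂ u with hΨ
  -- the key bound transported to finsupps
  have hΦΨ : ∀ f : (Ω × E₀) →₀ ℂ, ‖Ψ f‖ ≤ c' * ‖Φ f‖ := by
    intro f
    set s := f.support with hs
    set e : Fin s.card ≃ {x // x ∈ s} := s.equivFin.symm with he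
    set w : Fin s.card → Ω := fun i => ((e i : Ω × E₀)).1 with hw
    set ζ : Fin s.card → E₀ := fun i => f (e i) • ((e i : Ω × E₀)).2 with hζ
    have h1 : ∑ i : Fin s.card, κ (w i) (ζ i) = Φ f := by
      have : ∀ i : Fin s.card, κ (w i) (ζ i) = f (e i) • v (e i : Ω × E₀) := by
        intro i; simp [hw, hζ, hv, map_smul]
      rw [Finset.sum_congr rfl fun i _ => this i, Equiv.sum_comp e (fun a : s => f a • v a),
        Finset.sum_coe_sort s (fun a => f a • v a)]
      rw [hΦ, Finsupp.linearCombination_apply, Finsupp.sum]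
    have h2 : ∑ i : Fin s.card, (starRingEnd ℂ) ((w i : Fin m → ℂ) ℓ) • κ (w i) (ζ i) = Ψ f := by
      have : ∀ i : Fin s.card, (starRingEnd ℂ) ((w i : Fin m → ℂ) ℓ) • κ (w i) (ζ i)
          = f (e i) • u (e i : Ω × E₀) := by
        intro i
        simp only [hw, hζ, hu, map_smul]
        rw [smul_comm]
      rw [Finset.sum_congr rfl fun i _ => this i, Equiv.sum_comp e (fun a : s => f a • u a),
        Finset.sum_coe_sort s (fun a => f a • u a)]
      rw [hΨ, Finsupp.linearCombination_apply, Finsupp.sum]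
    rw [← h1, ← h2]
    exact hbd s.card w ζ
  have hker : LinearMap.ker Φ ≤ LinearMap.ker Ψ := by
    intro f hf
    rw [LinearMap.mem_ker] at hf ⊢
    have := hΦΨ f
    rw [hf, norm_zero, mul_zero] at this
    exact norm_le_zero_iff.mp this
  set S : Submodule ℂ H := LinearMap.range Φ with hSdef
  have hSspan : S = Submodule.span ℂ (⋃ w : Ω, Set.range (κ w)) := by
    rw [hSdef, hΦ, Finsupp.range_linearCombination]
    congr 1
    ext y
    simp only [Set.mem_range, Set.mem_iUnion]
    exact ⟨fun ⟨q, h⟩ => ⟨q.1, q.2, h⟩, fun ⟨w, x, h⟩ => ⟨(w, x), h⟩⟩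
  have hS : Dense (S : Set H) := by rw [hSspan]; exact hdense
  set T₀ : S →ₗ[ℂ] H :=
    (Submodule.liftQ (LinearMap.ker Φ) Ψ hker) ∘ₗ
      (LinearMap.quotKerEquivRange Φ).symm.toLinearMap with hT₀def
  have hT₀ : ∀ f : (Ω × E₀) →₀ ℂ, T₀ ⟨Φ f, LinearMap.mem_range_self Φ f⟩ = Ψ f := by
    intro f
    have h3 : (LinearMap.quotKerEquivRange Φ).symm ⟨Φ f, LinearMap.mem_range_self Φ f⟩
        = Submodule.Quotient.mk f := by
      rw [LinearEquiv.symm_apply_eq]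
      exact Subtype.ext (Φ.quotKerEquivRange_apply_mk f).symm
    simp only [hT₀def, LinearMap.comp_apply, LinearEquiv.coe_toLinearMap, h3,
      Submodule.liftQ_apply]
  have hT₀bound : ∀ y : S, ‖T₀ y‖ ≤ c' * ‖y‖ := by
    intro y
    obtain ⟨f, hf⟩ := y.2
    have hyy : y = ⟨Φ f, LinearMap.mem_range_self Φ f⟩ := Subtype.ext hf.symm
    rw [hyy, hT₀ f]
    have : ‖(⟨Φ f, LinearMap.mem_range_self Φ f⟩ : S)‖ = ‖Φ f‖ := rfl
    rw [this]
    exact hΦΨ f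
  set T₀c : S →L[ℂ] H := T₀.mkContinuous c' hT₀bound with hT₀c
  set e : S →L[ℂ] H := S.subtypeL with hedef
  have hde : DenseRange e := by
    have : Set.range e = (S : Set H) := Subtype.range_coe
    rw [DenseRange, this]; exact hS
  have hui : IsUniformInducing e := isometry_subtype_coe.isUniformInducing
  refine ⟨T₀c.extend e, ?_, ?_⟩
  · refine ContinuousLinearMap.opNorm_le_bound _ hc'.le fun y => ?_
    have hclosed : IsClosed {y : H | ‖T₀c.extend e y‖ ≤ c' * ‖y‖} :=
      isClosed_le (continuous_norm.comp (T₀c.extend e).continuous)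
        (continuous_const.mul continuous_norm)
    have hsub : (S : Set H) ⊆ {y : H | ‖T₀c.extend e y‖ ≤ c' * ‖y‖} := by
      intro y hy
      have h4 : y = e ⟨y, hy⟩ := rfl
      simp only [Set.mem_setOf_eq]
      rw [h4, ContinuousLinearMap.extend_eq _ hde hui]
      exact hT₀bound ⟨y, hy⟩
    exact closure_minimal hsub hclosed (hS y)
  · intro w x
    set f : (Ω × E₀) →₀ ℂ := Finsupp.single (w, x) (1 : ℂ) with hf
    have hΦf : Φ f = κ w x := by
      rw [hf, hΦ, Finsupp.linearCombination_single, one_smul]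
    have hΨf : Ψ f = (starRingEnd ℂ) ((w : Fin m → ℂ) ℓ) • κ w x := by
      rw [hf, hΨ, Finsupp.linearCombination_single, one_smul]
    have hmem : κ w x ∈ S := hΦf ▸ LinearMap.mem_range_self Φ f
    have h5 : (⟨κ w x, hmem⟩ : S) = ⟨Φ f, LinearMap.mem_range_self Φ f⟩ := Subtype.ext hΦf.symm
    have hee : e ⟨κ w x, hmem⟩ = κ w x := rfl
    have hext : (T₀c.extend e) (e ⟨κ w x, hmem⟩) = T₀c ⟨κ w x, hmem⟩ :=
      ContinuousLinearMap.extend_eq T₀c hde hui ⟨κ w x, hmem⟩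
    calc (T₀c.extend e) (κ w x) = T₀c ⟨κ w x, hmem⟩ := by
          conv_lhs => rw [← hee]
          exact hext
      _ = Ψ f := by show T₀ _ = _; rw [h5, hT₀ f]
      _ = _ := hΨf

/-- Lemma 1.4: boundedness of the densely defined coordinate "backward" operator
`T : κ w x ↦ conj (w ℓ) • κ w x` with bound `c` is equivalent to nonnegative definiteness of
the kernel `(z, w) ↦ (c² − z_ℓ conj (w_ℓ)) • K z w`; when such a `T` exists its adjoint is the
`ℓ`-th coordinate multiplication operator `M_ℓ`, and `‖T‖` is the smallest positive `c` for
which the positivity condition holds. -/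
theorem coordinate_multiplier_bounded_iff_nnd
    {m : ℕ} {Ω : Set (Fin m → ℂ)}
    {E₀ H : Type*} [NormedAddCommGroup E₀] [InnerProductSpace ℂ E₀] [CompleteSpace E₀]
    [NormedAddCommGroup H] [InnerProductSpace ℂ H] [CompleteSpace H]
    (κ : Ω → (E₀ →L[ℂ] H))
    (hdense : Dense (↑(Submodule.span ℂ (⋃ w : Ω, Set.range (κ w))) : Set H))
    (K : Ω → Ω → (E₀ →L[ℂ] E₀))
    (hK : ∀ z w : Ω, K z w = (ContinuousLinearMap.adjoint (κ z)).comp (κ w))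
    (ℓ : Fin m) (c : ℝ) (hc : 0 < c) :
    ((∃ T : H →L[ℂ] H, ‖T‖ ≤ c ∧ ∀ (w : Ω) (x : E₀),
        T (κ w x) = (starRingEnd ℂ) ((w : Fin m → ℂ) ℓ) • κ w x) ↔
      IsNNDKernel (fun (z w : Ω) =>
        (((c : ℂ) ^ 2 - (z : Fin m → ℂ) ℓ * (starRingEnd ℂ) ((w : Fin m → ℂ) ℓ)) • K z w)))
    ∧ (∀ T : H →L[ℂ] H,
        (∀ (w : Ω) (x : E₀), T (κ w x) = (starRingEnd ℂ) ((w : Fin m → ℂ) ℓ) • κ w x) →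
        (∀ z : Ω, (ContinuousLinearMap.adjoint (κ z)).comp (ContinuousLinearMap.adjoint T)
            = ((z : Fin m → ℂ) ℓ) • ContinuousLinearMap.adjoint (κ z))
        ∧ ‖T‖ = sInf {c' : ℝ | 0 < c' ∧ IsNNDKernel (fun (z w : Ω) =>
            (((c' : ℂ) ^ 2 - (z : Fin m → ℂ) ℓ * (starRingEnd ℂ) ((w : Fin m → ℂ) ℓ))
              • K z w))}) := by
  have main : ∀ c' : ℝ, 0 < c' →
      ((∃ T : H →L[ℂ] H, ‖T‖ ≤ c' ∧ ∀ (w : Ω) (x : E₀),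
        T (κ w x) = (starRingEnd ℂ) ((w : Fin m → ℂ) ℓ) • κ w x) ↔
      IsNNDKernel (fun (z w : Ω) =>
        (((c' : ℂ) ^ 2 - (z : Fin m → ℂ) ℓ * (starRingEnd ℂ) ((w : Fin m → ℂ) ℓ)) • K z w))) := by
    intro c' hc'
    have hiff := nnd_iff κ K hK ℓ c' hc'.le
    constructor
    · rintro ⟨T, hTn, hT⟩
      refine hiff.mpr ?_
      intro p w ζ
      have hTh : T (∑ i : Fin p, κ (w i) (ζ i))
          = ∑ i : Fin p, (starRingEnd ℂ) ((w i : Fin m → ℂ) ℓ) • κ (w i) (ζ i) := by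
        rw [map_sum]
        exact Finset.sum_congr rfl fun i _ => hT (w i) (ζ i)
      calc ‖∑ i : Fin p, (starRingEnd ℂ) ((w i : Fin m → ℂ) ℓ) • κ (w i) (ζ i)‖
          = ‖T (∑ i : Fin p, κ (w i) (ζ i))‖ := by rw [hTh]
        _ ≤ ‖T‖ * ‖∑ i : Fin p, κ (w i) (ζ i)‖ := T.le_opNorm _
        _ ≤ c' * ‖∑ i : Fin p, κ (w i) (ζ i)‖ :=
            mul_le_mul_of_nonneg_right hTn (norm_nonneg _)
    · intro hnnd
      exact exists_T κ hdense ℓ c' hc' (hiff.mp hnnd)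
  refine ⟨main c hc, ?_⟩
  intro T hT
  constructor
  · intro z
    ext h
    apply ext_inner_left ℂ
    intro v
    simp only [ContinuousLinearMap.comp_apply, ContinuousLinearMap.smul_apply,
      ContinuousLinearMap.adjoint_inner_right]
    rw [hT z v, inner_smul_left, inner_smul_right, Complex.conj_conj,
      ContinuousLinearMap.adjoint_inner_right]
  · have hset : {c' : ℝ | 0 < c' ∧ IsNNDKernel (fun (z w : Ω) =>
            (((c' : ℂ) ^ 2 - (z : Fin m → ℂ) ℓ * (starRingEnd ℂ) ((w : Fin m → ℂ) ℓ))
              • K z w))} = {c' : ℝ | 0 < c' ∧ ‖T‖ ≤ c'} := by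
      ext c'
      simp only [Set.mem_setOf_eq]
      constructor
      · rintro ⟨hc'', hnnd⟩
        obtain ⟨T', hT'n, hT'⟩ := (main c' hc'').mpr hnnd
        have hTT' : T = T' := by
          refine ContinuousLinearMap.ext_on hdense ?_
          intro y hy
          simp only [Set.mem_iUnion, Set.mem_range] at hy
          obtain ⟨w, x, rfl⟩ := hy
          rw [hT w x, hT' w x]
        exact ⟨hc'', hTT' ▸ hT'n⟩
      · rintro ⟨hc'', hn⟩
        exact ⟨hc'', (main c' hc'').mp ⟨T, hn, hT⟩⟩
    rw [hset]
    rcases eq_or_lt_of_le (norm_nonneg T) with h0 | h0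
    · have : {c' : ℝ | 0 < c' ∧ ‖T‖ ≤ c'} = Set.Ioi 0 := by
        ext c'
        simp only [Set.mem_setOf_eq, Set.mem_Ioi, and_iff_left_iff_imp]
        intro hcp
        rw [← h0]
        exact hcp.le
      rw [this, csInf_Ioi, ← h0]
    · have : {c' : ℝ | 0 < c' ∧ ‖T‖ ≤ c'} = Set.Ici ‖T‖ := by
        ext c'
        simp only [Set.mem_setOf_eq, Set.mem_Ici]
        exact ⟨fun h => h.2, fun h => ⟨lt_of_lt_of_le h0 h, h⟩⟩
      rw [this, csInf_Ici]
end

section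
/- (Theorem 2.2, factorization form.) Let Ω be a set, E₀ a complex Hilbert space, K : Ω → Ω → (E₀ →L[ℂ] E₀) a kernel, and k : Ω → Ω → ℂ a scalar function. Then the following are equivalent: (i) there exist a complex Hilbert space E and a map π : Ω → (E →L[ℂ] E₀) such that K z w = k z w • (π z ∘L (π w)*) for all z, w ∈ Ω; (ii) there exists a nonnegative definite kernel G : Ω → Ω → (E₀ →L[ℂ] E₀) such that K z w = k z w • (G z w) for all z, w ∈ Ω. -/
open scoped ComplexOrder

variable {Ω : Type u} {E₀ : Type v} [NormedAddCommGroup E₀] [InnerProductSpace ℂ E₀]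

lemma nnd_self {G : Ω → Ω → (E₀ →L[ℂ] E₀)} (hG : IsNNDKernel G) (x : Ω) (ξ : E₀) :
    0 ≤ (inner ℂ (G x x ξ) ξ : ℂ) := by
  simpa using hG 1 (fun _ => x) (fun _ => ξ)

lemma nnd_symm {G : Ω → Ω → (E₀ →L[ℂ] E₀)} (hG : IsNNDKernel G) (x y : Ω) (ξ η : E₀) :
    (inner ℂ (G y x ξ) η : ℂ) = starRingEnd ℂ (inner ℂ (G x y η) ξ) := by
  have hd1 := nnd_self hG x ξ
  have hd2 := nnd_self hG y η
  have h1 := hG 2 ![x, y] ![ξ, η]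
  have h2 := hG 2 ![x, y] ![ξ, Complex.I • η]
  simp [Fin.sum_univ_two, Complex.le_def] at h1 h2 hd1 hd2
  set a := (inner ℂ (G x y η) ξ : ℂ) with ha
  set b := (inner ℂ (G y x ξ) η : ℂ) with hb
  have e1 : (inner ℂ (Complex.I • (G x y) η) ξ : ℂ) = -Complex.I * a := by
    rw [inner_smul_left]; simp [ha]
  have e2 : (inner ℂ ((G y x) ξ) (Complex.I • η) : ℂ) = Complex.I * b := by
    rw [inner_smul_right]
  have e3 : (inner ℂ (Complex.I • (G y y) η) (Complex.I • η) : ℂ) = inner ℂ ((G y y) η) η := by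
    rw [inner_smul_left, inner_smul_right]; simp [← mul_assoc, Complex.conj_I]
  obtain ⟨-, h1im⟩ := h1
  obtain ⟨-, h2im⟩ := h2
  apply Complex.ext <;> simp [Complex.conj_re, Complex.conj_im] <;> linarith [hd1.2, hd2.2]


noncomputable def kerB (G : Ω → Ω → (E₀ →L[ℂ] E₀)) (p q : Ω × E₀) : ℂ :=
  inner ℂ (G q.1 p.1 p.2) q.2

noncomputable def kerInner (G : Ω → Ω → (E₀ →L[ℂ] E₀)) (f g : (Ω × E₀) →₀ ℂ) : ℂ :=
  f.sum fun p a => starRingEnd ℂ a * g.sum fun q c => c * kerB G p q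

lemma kerInner_add_left (G : Ω → Ω → (E₀ →L[ℂ] E₀)) (x y z : (Ω × E₀) →₀ ℂ) :
    kerInner G (x + y) z = kerInner G x z + kerInner G y z := by
  unfold kerInner
  rw [Finsupp.sum_add_index' (fun p => by simp) (fun p a₁ a₂ => by rw [map_add, add_mul])]

lemma kerInner_smul_left (G : Ω → Ω → (E₀ →L[ℂ] E₀)) (r : ℂ) (x y : (Ω × E₀) →₀ ℂ) :
    kerInner G (r • x) y = starRingEnd ℂ r * kerInner G x y := by
  unfold kerInner
  rw [Finsupp.sum_smul_index' (fun p => by simp), Finsupp.mul_sum]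
  exact Finsupp.sum_congr fun p _ => by rw [smul_eq_mul, map_mul, mul_assoc]

lemma kerInner_single (G : Ω → Ω → (E₀ →L[ℂ] E₀)) (p q : Ω × E₀) :
    kerInner G (Finsupp.single p 1) (Finsupp.single q 1) = kerB G p q := by
  unfold kerInner
  rw [Finsupp.sum_single_index (by simp), Finsupp.sum_single_index (by simp)]
  simp

lemma kerB_conj {G : Ω → Ω → (E₀ →L[ℂ] E₀)} (hG : IsNNDKernel G) (p q : Ω × E₀) :
    starRingEnd ℂ (kerB G p q) = kerB G q p := by
  have := nnd_symm hG q.1 p.1 q.2 p.2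
  rw [kerB, kerB, this]

lemma kerInner_conj_symm {G : Ω → Ω → (E₀ →L[ℂ] E₀)} (hG : IsNNDKernel G)
    (x y : (Ω × E₀) →₀ ℂ) :
    starRingEnd ℂ (kerInner G y x) = kerInner G x y := by
  unfold kerInner
  calc starRingEnd ℂ (y.sum fun p a => starRingEnd ℂ a * x.sum fun q c => c * kerB G p q)
      = y.sum fun p a => x.sum fun q c => a * (starRingEnd ℂ c * kerB G q p) := by
        rw [map_finsuppSum]
        refine Finsupp.sum_congr fun p _ => ?_
        rw [map_mul, Complex.conj_conj, map_finsuppSum, Finsupp.mul_sum]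
        refine Finsupp.sum_congr fun q _ => ?_
        rw [map_mul, kerB_conj hG]
    _ = x.sum fun q c => y.sum fun p a => a * (starRingEnd ℂ c * kerB G q p) :=
        Finsupp.sum_comm _ _ _
    _ = x.sum fun q c => starRingEnd ℂ c * y.sum fun p a => a * kerB G q p := by
        refine Finsupp.sum_congr fun q _ => ?_
        rw [Finsupp.mul_sum]
        exact Finsupp.sum_congr fun p _ => by ring

lemma kerInner_self_nonneg {G : Ω → Ω → (E₀ →L[ℂ] E₀)} (hG : IsNNDKernel G)
    (f : (Ω × E₀) →₀ ℂ) : 0 ≤ kerInner G f f := by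
  classical
  set s := f.support with hs
  set n := s.card with hn
  set e := s.equivFin with he
  set g : Ω × E₀ → Ω × E₀ → ℂ := fun p q => starRingEnd ℂ (f p) * (f q * kerB G p q) with hg
  have hterm : ∀ (p q : Ω × E₀),
      (inner ℂ (G q.1 p.1 ((f p) • p.2)) ((f q) • q.2) : ℂ) = g p q := by
    intro p q
    rw [map_smul, inner_smul_left, inner_smul_right]
    simp only [hg, kerB]
    try ring
  have hpos := hG n (fun i => (e.symm i : Ω × E₀).1)
      (fun i => f (e.symm i) • (e.symm i : Ω × E₀).2)
  simp only [hterm] at hpos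
  refine le_of_le_of_eq hpos ?_
  calc ∑ i : Fin n, ∑ j : Fin n, g (e.symm i) (e.symm j)
      = ∑ i : Fin n, ∑ q : s, g (e.symm i) q :=
        Finset.sum_congr rfl fun i _ =>
          Equiv.sum_comp e.symm (fun q : s => g ((e.symm i : Ω × E₀)) (q : Ω × E₀))
    _ = ∑ p : s, ∑ q : s, g (p : Ω × E₀) q :=
        Equiv.sum_comp e.symm (fun p : s => ∑ q : s, g (p : Ω × E₀) (q : Ω × E₀))
    _ = ∑ p : s, ∑ q ∈ s, g (p : Ω × E₀) q :=
        Finset.sum_congr rfl fun p _ => Finset.sum_coe_sort s (g (p : Ω × E₀))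
    _ = ∑ p ∈ s, ∑ q ∈ s, g p q := Finset.sum_coe_sort s (fun p => ∑ q ∈ s, g p q)
    _ = kerInner G f f := by
        unfold kerInner Finsupp.sum
        simp only [hg, Finset.mul_sum, ← hs]

set_option maxHeartbeats 1000000 in
lemma kolmogorov_decomposition [CompleteSpace E₀]
    (G : Ω → Ω → (E₀ →L[ℂ] E₀)) (hG : IsNNDKernel G) :
    ∃ (E : Type (max u v)) (_ : NormedAddCommGroup E) (_ : InnerProductSpace ℂ E)
      (_ : CompleteSpace E) (π : Ω → (E →L[ℂ] E₀)),
      ∀ z w : Ω, G z w = (π z).comp (ContinuousLinearMap.adjoint (π w)) := by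
  classical
  letI core : PreInnerProductSpace.Core ℂ ((Ω × E₀) →₀ ℂ) :=
    { inner := kerInner G
      conj_inner_symm := fun x y => kerInner_conj_symm hG x y
      re_inner_nonneg := fun x => by simpa using (Complex.le_def.mp (kerInner_self_nonneg hG x)).1
      add_left := kerInner_add_left G
      smul_left := fun x y r => kerInner_smul_left G r x y }
  letI : SeminormedAddCommGroup ((Ω × E₀) →₀ ℂ) :=
    @InnerProductSpace.Core.toSeminormedAddCommGroup ℂ ((Ω × E₀) →₀ ℂ) _ _ _ core
  letI : NormedSpace ℂ ((Ω × E₀) →₀ ℂ) :=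
    @InnerProductSpace.Core.toNormedSpace ℂ ((Ω × E₀) →₀ ℂ) _ _ _ core
  letI : InnerProductSpace ℂ ((Ω × E₀) →₀ ℂ) :=
    { core with
      norm_sq_eq_re_inner := fun x => by
        have h₂ : 0 ≤ RCLike.re (core.inner x x) := core.re_inner_nonneg x
        exact Real.sq_sqrt h₂ }
  set E := UniformSpace.Completion ((Ω × E₀) →₀ ℂ) with hE
  have key : ∀ p q : Ω × E₀,
      (inner ℂ ((Finsupp.single p 1 : (Ω × E₀) →₀ ℂ) : E) ((Finsupp.single q 1 : (Ω × E₀) →₀ ℂ) : E) : ℂ) = kerB G p q := by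
    intro p q
    rw [UniformSpace.Completion.inner_coe]
    exact kerInner_single G p q
  set ι : Ω × E₀ → E := fun p => ((Finsupp.single p 1 : (Ω × E₀) →₀ ℂ) : E) with hι
  have heq : ∀ u v : E, (inner ℂ (u - v) (u - v) : ℂ) = 0 → u = v := fun u v h =>
    sub_eq_zero.mp (inner_self_eq_zero.mp h)
  have hadd : ∀ (w : Ω) (ξ η : E₀), ι (w, ξ + η) = ι (w, ξ) + ι (w, η) := by
    intro w ξ η
    refine heq _ _ ?_
    rw [inner_sub_left, inner_sub_right, inner_sub_right]
    simp only [inner_sub_left, inner_sub_right, inner_add_left, inner_add_right, hι, key, kerB,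
      map_add, ContinuousLinearMap.add_apply]
    ring
  have hsmul : ∀ (w : Ω) (c : ℂ) (ξ : E₀), ι (w, c • ξ) = c • ι (w, ξ) := by
    intro w c ξ
    refine heq _ _ ?_
    rw [inner_sub_left, inner_sub_right, inner_sub_right]
    simp only [inner_sub_left, inner_sub_right, inner_smul_left, inner_smul_right, hι, key, kerB,
      map_smul, ContinuousLinearMap.smul_apply]
    ring_nf
    try simp [Complex.mul_conj, mul_comm, mul_assoc, mul_left_comm]
    try ring
  have hbound : ∀ (w : Ω) (ξ : E₀), ‖ι (w, ξ)‖ ≤ Real.sqrt ‖G w w‖ * ‖ξ‖ := by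
    intro w ξ
    have h2 : ‖ι (w, ξ)‖ ^ 2 = RCLike.re (inner ℂ (ι (w, ξ)) (ι (w, ξ)) : ℂ) :=
      norm_sq_eq_re_inner _
    have h3 : (inner ℂ (ι (w, ξ)) (ι (w, ξ)) : ℂ) = inner ℂ (G w w ξ) ξ := key (w, ξ) (w, ξ)
    have h4 : RCLike.re (inner ℂ (G w w ξ) ξ : ℂ) ≤ ‖G w w‖ * ‖ξ‖ * ‖ξ‖ := by
      calc RCLike.re (inner ℂ (G w w ξ) ξ : ℂ) ≤ ‖(inner ℂ (G w w ξ) ξ : ℂ)‖ := RCLike.re_le_norm _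
        _ ≤ ‖G w w ξ‖ * ‖ξ‖ := norm_inner_le_norm _ _
        _ ≤ ‖G w w‖ * ‖ξ‖ * ‖ξ‖ :=
            mul_le_mul_of_nonneg_right ((G w w).le_opNorm ξ) (norm_nonneg _)
    have h5 : ‖ι (w, ξ)‖ ^ 2 ≤ ‖G w w‖ * ‖ξ‖ ^ 2 := by
      rw [h2, h3]; calc RCLike.re (inner ℂ (G w w ξ) ξ : ℂ) ≤ ‖G w w‖ * ‖ξ‖ * ‖ξ‖ := h4
        _ = ‖G w w‖ * ‖ξ‖ ^ 2 := by ring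
    calc ‖ι (w, ξ)‖ = Real.sqrt (‖ι (w, ξ)‖ ^ 2) := (Real.sqrt_sq (norm_nonneg _)).symm
      _ ≤ Real.sqrt (‖G w w‖ * ‖ξ‖ ^ 2) := Real.sqrt_le_sqrt h5
      _ = Real.sqrt ‖G w w‖ * ‖ξ‖ := by
          rw [Real.sqrt_mul (norm_nonneg _), Real.sqrt_sq (norm_nonneg _)]
  set V : Ω → (E₀ →L[ℂ] E) := fun w => LinearMap.mkContinuous
    { toFun := fun ξ => ι (w, ξ)
      map_add' := hadd w
      map_smul' := fun c ξ => hsmul w c ξ } (Real.sqrt ‖G w w‖) (hbound w) with hV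
  refine ⟨E, inferInstance, inferInstance, inferInstance,
    fun w => ContinuousLinearMap.adjoint (V w), fun z w => ?_⟩
  rw [ContinuousLinearMap.adjoint_adjoint]
  ext ξ
  refine ext_inner_right ℂ fun η => ?_
  rw [ContinuousLinearMap.comp_apply, ContinuousLinearMap.adjoint_inner_left]
  have hVapp : ∀ (w : Ω) (ξ : E₀), V w ξ = ι (w, ξ) := fun _ _ => rfl
  rw [hVapp, hVapp, hι]
  exact (key (w, ξ) (z, η)).symm

lemma isNND_of_factor {E : Type w} [NormedAddCommGroup E] [InnerProductSpace ℂ E]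
    [CompleteSpace E] [CompleteSpace E₀] (π : Ω → (E →L[ℂ] E₀)) :
    IsNNDKernel (fun z w => (π z).comp (ContinuousLinearMap.adjoint (π w))) := by
  intro p w ζ
  have hterm : ∀ i j : Fin p,
      (inner ℂ (((π (w j)).comp (ContinuousLinearMap.adjoint (π (w i)))) (ζ i)) (ζ j) : ℂ)
        = inner ℂ ((ContinuousLinearMap.adjoint (π (w i))) (ζ i))
            ((ContinuousLinearMap.adjoint (π (w j))) (ζ j)) := by
    intro i j
    rw [ContinuousLinearMap.comp_apply, ← ContinuousLinearMap.adjoint_inner_right]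
  calc (0 : ℂ) ≤ inner ℂ (∑ i : Fin p, (ContinuousLinearMap.adjoint (π (w i))) (ζ i))
        (∑ j : Fin p, (ContinuousLinearMap.adjoint (π (w j))) (ζ j)) := by
        refine Complex.le_def.mpr ⟨?_, ?_⟩
        · simpa [RCLike.re_to_complex] using inner_self_nonneg (𝕜 := ℂ)
            (x := ∑ i : Fin p, (ContinuousLinearMap.adjoint (π (w i))) (ζ i))
        · have := inner_self_im (𝕜 := ℂ) (∑ i : Fin p, (ContinuousLinearMap.adjoint (π (w i))) (ζ i))
          simp only [RCLike.im_to_complex] at this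
          simp [this, ← Complex.ofReal_pow]
    _ = ∑ i : Fin p, ∑ j : Fin p,
        (inner ℂ (((π (w j)).comp (ContinuousLinearMap.adjoint (π (w i)))) (ζ i)) (ζ j) : ℂ) := by
        rw [sum_inner]
        refine Finset.sum_congr rfl fun i _ => ?_
        rw [inner_sum]
        exact Finset.sum_congr rfl fun j _ => (hterm i j).symm

/-- Theorem 2.2, factorization form: a kernel `K` factors as
`K z w = k z w • (π z ∘ (π w)*)` through some Hilbert space `E` if and only if
`K z w = k z w • G z w` for some nonnegative definite kernel `G`. -/
theorem kernel_factors_through_hilbert_space_iff_nnd_factor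
    {Ω : Type u} {E₀ : Type v}
    [NormedAddCommGroup E₀] [InnerProductSpace ℂ E₀] [CompleteSpace E₀]
    (K : Ω → Ω → (E₀ →L[ℂ] E₀)) (k : Ω → Ω → ℂ) :
    (∃ (E : Type (max u v)) (_ : NormedAddCommGroup E) (_ : InnerProductSpace ℂ E)
        (_ : CompleteSpace E) (π : Ω → (E →L[ℂ] E₀)),
      ∀ z w : Ω, K z w = k z w • ((π z).comp (ContinuousLinearMap.adjoint (π w)))) ↔
    (∃ G : Ω → Ω → (E₀ →L[ℂ] E₀), IsNNDKernel G ∧ ∀ z w : Ω, K z w = k z w • G z w) := by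
  constructor
  · rintro ⟨E, _, _, _, π, hπ⟩
    exact ⟨fun z w => (π z).comp (ContinuousLinearMap.adjoint (π w)), isNND_of_factor π, hπ⟩
  · rintro ⟨G, hG, hK⟩
    obtain ⟨E, i1, i2, i3, π, hπ⟩ := kolmogorov_decomposition G hG
    exact ⟨E, i1, i2, i3, π, fun z w => by rw [hK, hπ]⟩
end

section
/- (Theorem 3.1.) Let Ω ⊆ ℂ^m, E₀ and H complex Hilbert spaces, κ : Ω → (E₀ →L[ℂ] H) with {κ w x} of dense linear span in H and kernel K z w := (κ z)* ∘L (κ w). Let M₁, …, M_m be pairwise commuting bounded operators on H with (M_ℓ)* (κ w x) = conj(w_ℓ) • (κ w x) for all w ∈ Ω, x ∈ E₀, ℓ. Then the self-adjoint operator ∑_{A ⊆ Fin m} (−1)^{|A|} (∏_{ℓ ∈ A} M_ℓ) ∘ (∏_{ℓ ∈ A} M_ℓ)* (the hereditary functional calculus value 𝕊^{-1}(M, M*) of the inverse Szegő polynomial ∏_{ℓ=1}^m (1 − z_ℓ conj(w_ℓ))) is a positive operator on H if and only if the kernel (z, w) ↦ (∏_{ℓ=1}^m (1 − z_ℓ ·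 conj(w_ℓ))) • K z w is nonnegative definite on Ω. -/
open scoped ComplexOrder

/-- Theorem 3.1: for the commuting coordinate multipliers `M₁, …, M_m` on a reproducing
kernel Hilbert space with kernel `K` on `Ω ⊆ ℂ^m`, the hereditary functional calculus value
`𝕊⁻¹(M, M*) = ∑_{A ⊆ {1,…,m}} (−1)^{|A|} M^A (M^A)*` of the inverse Szegő polynomial is a
positive operator if and only if `(z, w) ↦ (∏_ℓ (1 − z_ℓ conj (w_ℓ))) • K z w` is a
nonnegative definite kernel. -/
theorem hereditary_szego_positive_iff_nnd
    {m : ℕ} {Ω : Set (Fin m → ℂ)} {E₀ H : Type*}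
    [NormedAddCommGroup E₀] [InnerProductSpace ℂ E₀] [CompleteSpace E₀]
    [NormedAddCommGroup H] [InnerProductSpace ℂ H] [CompleteSpace H]
    (κ : Ω → (E₀ →L[ℂ] H))
    (hdense : Dense (↑(Submodule.span ℂ (⋃ w : Ω, Set.range (κ w))) : Set H))
    (K : Ω → Ω → (E₀ →L[ℂ] E₀))
    (hK : ∀ z w : Ω, K z w = (ContinuousLinearMap.adjoint (κ z)).comp (κ w))
    (M : Fin m → (H →L[ℂ] H))
    (hcomm : ∀ i j : Fin m, Commute (M i) (M j))
    (hM : ∀ (ℓ : Fin m) (w : Ω) (x : E₀),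
      (ContinuousLinearMap.adjoint (M ℓ)) (κ w x)
        = (starRingEnd ℂ) ((w : Fin m → ℂ) ℓ) • κ w x) :
    (∀ f : H,
      0 ≤ (inner ℂ ((∑ A : Finset (Fin m), ((-1 : ℂ) ^ A.card) •
          ((A.noncommProd M (fun i _ j _ _ => hcomm i j)) *
            ContinuousLinearMap.adjoint (A.noncommProd M (fun i _ j _ _ => hcomm i j)))) f)
        f : ℂ)) ↔
    IsNNDKernel (fun (z w : Ω) =>
      (∏ ℓ : Fin m, (1 - (z : Fin m → ℂ) ℓ * (starRingEnd ℂ) ((w : Fin m → ℂ) ℓ))) • K z w) := by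
  classical
  set S : H →L[ℂ] H := ∑ A : Finset (Fin m), ((-1 : ℂ) ^ A.card) •
      ((A.noncommProd M (fun i _ j _ _ => hcomm i j)) *
        ContinuousLinearMap.adjoint (A.noncommProd M (fun i _ j _ _ => hcomm i j))) with hSdef
  -- eigenvector property of adjoints of products
  have hadj : ∀ (A : Finset (Fin m)) (w : Ω) (x : E₀),
      ContinuousLinearMap.adjoint (A.noncommProd M (fun i _ j _ _ => hcomm i j)) (κ w x)
        = (∏ ℓ ∈ A, (starRingEnd ℂ) ((w : Fin m → ℂ) ℓ)) • κ w x := by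
    intro A
    induction A using Finset.cons_induction with
    | empty =>
        intro w x
        have h1 : (∅ : Finset (Fin m)).noncommProd M (fun i _ j _ _ => hcomm i j) = 1 :=
          Finset.noncommProd_empty _ _
        simp [h1, ContinuousLinearMap.one_def,
          ContinuousLinearMap.adjoint_id]
    | cons a A ha ih =>
      intro w x
      have hc : (Finset.cons a A ha).noncommProd M (fun i _ j _ _ => hcomm i j)
          = M a * A.noncommProd M (fun i _ j _ _ => hcomm i j) :=
        Finset.noncommProd_cons _ _ _ _ _
      rw [hc]
      have : (M a * A.noncommProd M (fun i _ j _ _ => hcomm i j))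
          = (M a).comp (A.noncommProd M (fun i _ j _ _ => hcomm i j)) := rfl
      rw [this, ContinuousLinearMap.adjoint_comp, ContinuousLinearMap.comp_apply,
        hM a w x, map_smul, ih w x, Finset.prod_cons, smul_smul]
  -- scalar identity
  have hprod : ∀ c : Fin m → ℂ,
      (∑ A : Finset (Fin m), ∏ ℓ ∈ A, -(c ℓ)) = ∏ ℓ : Fin m, (1 - c ℓ) := by
    intro c
    calc (∑ A : Finset (Fin m), ∏ ℓ ∈ A, -(c ℓ))
        = ∑ A ∈ Finset.univ.powerset, (∏ ℓ ∈ A, -(c ℓ)) * ∏ ℓ ∈ Finset.univ \ A, (1 : ℂ) := by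
          simp [Finset.powerset_univ]
      _ = ∏ ℓ : Fin m, (-(c ℓ) + 1) := (Finset.prod_add _ _ _).symm
      _ = ∏ ℓ : Fin m, (1 - c ℓ) := by
          refine Finset.prod_congr rfl fun ℓ _ => by ring
  -- key inner product computation on kernel vectors
  have hSinner : ∀ (w z : Ω) (x y : E₀),
      (inner ℂ (S (κ w x)) (κ z y) : ℂ)
        = (∏ ℓ : Fin m, (1 - (w : Fin m → ℂ) ℓ * (starRingEnd ℂ) ((z : Fin m → ℂ) ℓ)))
            * inner ℂ (κ w x) (κ z y) := by
    intro w z x y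
    rw [hSdef, ContinuousLinearMap.sum_apply, sum_inner]
    have hterm : ∀ A : Finset (Fin m),
        (inner ℂ ((((-1 : ℂ) ^ A.card) •
            ((A.noncommProd M (fun i _ j _ _ => hcomm i j)) *
              ContinuousLinearMap.adjoint (A.noncommProd M (fun i _ j _ _ => hcomm i j))))
              (κ w x)) (κ z y) : ℂ)
          = (∏ ℓ ∈ A, -((w : Fin m → ℂ) ℓ * (starRingEnd ℂ) ((z : Fin m → ℂ) ℓ)))
              * inner ℂ (κ w x) (κ z y) := by
      intro A
      rw [ContinuousLinearMap.smul_apply, inner_smul_left, ContinuousLinearMap.mul_apply,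
        ← ContinuousLinearMap.adjoint_inner_right, hadj, hadj, inner_smul_left,
        inner_smul_right]
      simp only [map_pow, map_neg, map_one, map_prod, RingHomCompTriple.comp_apply,
        Complex.conj_conj, RingHom.id_apply]
      have hneg : (∏ ℓ ∈ A, -((w : Fin m → ℂ) ℓ * (starRingEnd ℂ) ((z : Fin m → ℂ) ℓ)))
          = (-1 : ℂ) ^ A.card *
              ∏ ℓ ∈ A, ((w : Fin m → ℂ) ℓ * (starRingEnd ℂ) ((z : Fin m → ℂ) ℓ)) := by
        calc (∏ ℓ ∈ A, -((w : Fin m → ℂ) ℓ * (starRingEnd ℂ) ((z : Fin m → ℂ) ℓ)))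
            = ∏ ℓ ∈ A, ((-1 : ℂ) * ((w : Fin m → ℂ) ℓ * (starRingEnd ℂ) ((z : Fin m → ℂ) ℓ))) :=
              Finset.prod_congr rfl fun ℓ _ => (neg_one_mul _).symm
          _ = (∏ _ℓ ∈ A, (-1 : ℂ)) *
                ∏ ℓ ∈ A, ((w : Fin m → ℂ) ℓ * (starRingEnd ℂ) ((z : Fin m → ℂ) ℓ)) :=
              Finset.prod_mul_distrib
          _ = _ := by rw [Finset.prod_const]
      rw [hneg, Finset.prod_mul_distrib]
      ring
    calc (∑ A : Finset (Fin m),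
          (inner ℂ ((((-1 : ℂ) ^ A.card) •
            ((A.noncommProd M (fun i _ j _ _ => hcomm i j)) *
              ContinuousLinearMap.adjoint (A.noncommProd M (fun i _ j _ _ => hcomm i j))))
              (κ w x)) (κ z y) : ℂ))
        = ∑ A : Finset (Fin m),
            (∏ ℓ ∈ A, -((w : Fin m → ℂ) ℓ * (starRingEnd ℂ) ((z : Fin m → ℂ) ℓ)))
              * inner ℂ (κ w x) (κ z y) := Finset.sum_congr rfl fun A _ => hterm A
      _ = (∑ A : Finset (Fin m),
            ∏ ℓ ∈ A, -((w : Fin m → ℂ) ℓ * (starRingEnd ℂ) ((z : Fin m → ℂ) ℓ)))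
              * inner ℂ (κ w x) (κ z y) := (Finset.sum_mul _ _ _).symm
      _ = _ := by rw [hprod]
  -- the double sum identity
  have hdouble : ∀ (p : ℕ) (w : Fin p → Ω) (ζ : Fin p → E₀),
      (inner ℂ (S (∑ i : Fin p, κ (w i) (ζ i))) (∑ j : Fin p, κ (w j) (ζ j)) : ℂ)
        = ∑ i : Fin p, ∑ j : Fin p,
            (inner ℂ (((∏ ℓ : Fin m,
                (1 - ((w j : Fin m → ℂ)) ℓ * (starRingEnd ℂ) (((w i : Fin m → ℂ)) ℓ)))
              • K (w j) (w i)) (ζ i)) (ζ j) : ℂ) := by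
    intro p w ζ
    rw [map_sum, sum_inner]
    refine Finset.sum_congr rfl fun i _ => ?_
    rw [inner_sum]
    refine Finset.sum_congr rfl fun j _ => ?_
    rw [hSinner]
    rw [ContinuousLinearMap.smul_apply, inner_smul_left, hK, ContinuousLinearMap.comp_apply,
      ContinuousLinearMap.adjoint_inner_left]
    congr 1
    rw [map_prod]
    refine Finset.prod_congr rfl fun ℓ _ => ?_
    simp only [map_sub, map_one, map_mul, Complex.conj_conj]
    ring
  constructor
  · intro hpos p w ζ
    have := hpos (∑ i : Fin p, κ (w i) (ζ i))
    rw [hdouble p w ζ] at this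
    exact this
  · intro hnnd f
    -- the set of vectors with nonnegative quadratic form is closed
    have hcont : Continuous fun g : H => (inner ℂ (S g) g : ℂ) :=
      (S.continuous).inner continuous_id
    have hclosed : IsClosed {g : H | 0 ≤ (inner ℂ (S g) g : ℂ)} := by
      have : {g : H | 0 ≤ (inner ℂ (S g) g : ℂ)}
          = (fun g : H => (inner ℂ (S g) g : ℂ)) ⁻¹' {c : ℂ | 0 ≤ c} := rfl
      rw [this]
      refine IsClosed.preimage hcont ?_
      have : {c : ℂ | 0 ≤ c} = Complex.re ⁻¹' Set.Ici 0 ∩ Complex.im ⁻¹' {0} := by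
        ext c
        simp [Complex.le_def, eq_comm]
      rw [this]
      exact ((isClosed_Ici).preimage Complex.continuous_re).inter
        ((isClosed_singleton).preimage Complex.continuous_im)
    -- nonnegativity on the span
    have hspan : ∀ g ∈ Submodule.span ℂ (⋃ w : Ω, Set.range (κ w)),
        0 ≤ (inner ℂ (S g) g : ℂ) := by
      intro g hg
      obtain ⟨n, c, v, hv⟩ := Submodule.mem_span_set'.mp hg
      have hrep : ∀ i : Fin n, ∃ (w : Ω) (x : E₀), κ w x = c i • (v i : H) := by
        intro i
        have := (v i).2
        rw [Set.mem_iUnion] at this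
        obtain ⟨w, hw⟩ := this
        obtain ⟨x, hx⟩ := hw
        exact ⟨w, c i • x, by rw [map_smul, hx]⟩
      choose w ζ hwζ using hrep
      have hg' : g = ∑ i : Fin n, κ (w i) (ζ i) := by
        rw [← hv]
        exact (Finset.sum_congr rfl fun i _ => (hwζ i)).symm
      rw [hg', hdouble n w ζ]
      exact hnnd n w ζ
    -- extend by density
    have hf : f ∈ closure (↑(Submodule.span ℂ (⋃ w : Ω, Set.range (κ w))) : Set H) :=
      hdense f
    have hsub : (↑(Submodule.span ℂ (⋃ w : Ω, Set.range (κ w))) : Set H)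
        ⊆ {g : H | 0 ≤ (inner ℂ (S g) g : ℂ)} := fun g hg => hspan g hg
    exact hclosed.closure_subset ((closure_mono hsub) hf)
end

section
/- (Uniqueness of the minimal isometric co-extension, Theorem 3.3.) Let H be a complex Hilbert space and N₁, …, N_m pairwise commuting bounded operators on H. For i = 1, 2 let K_i be a complex Hilbert space carrying an m-tuple V^{(i)}_1, …, V^{(i)}_m of doubly commuting isometries: each V^{(i)}_ℓ is an isometry, V^{(i)}_ℓ V^{(i)}_j = V^{(i)}_j V^{(i)}_ℓ for all ℓ, j, and (V^{(i)}_ℓ)* V^{(i)}_j = V^{(i)}_j (V^{(i)}_ℓ)* for ℓ ≠ j. Let X_i : K_i →L[ℂ] H satisfy X_i ∘ (X_i)* = id_H and X_i ∘ V^{(i)}_ℓ = N_ℓ ∘ X_i for all ℓ, and assume minimality: the closed linear span of {(V^{(i)})^α ((X_i)* h) : α ∈ ℕ^m, h ∈ H} equals K_i, where (V^{(i)})^α := ∏_ℓ (V^{(i)}_ℓ)^{α_ℓ}. Then there exists a unitary U : K₁ → K₂ such that U ∘ V^{(1)}_ℓ = V^{(2)}_ℓ ∘ U for every ℓ and X₂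 ∘ U = X₁. In particular, the minimal isometric co-extension of a Hilbert module to a vector-valued Hardy module H²(𝔻^m) ⊗ E is unique. -/
/-- The joint power `V^α = ∏_ℓ (V ℓ)^(α ℓ)` of a commuting tuple of operators. -/
noncomputable def tuplePow {m : ℕ} {K : Type*} [NormedAddCommGroup K]
    [InnerProductSpace ℂ K] [CompleteSpace K]
    (V : Fin m → (K →L[ℂ] K)) (hV : ∀ i j : Fin m, Commute (V i) (V j))
    (α : Fin m → ℕ) : K →L[ℂ] K :=
  Finset.univ.noncommProd (fun ℓ => (V ℓ) ^ (α ℓ))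
    (fun i _ j _ _ => (hV i j).pow_pow (α i) (α j))

open ContinuousLinearMap

section Aux

variable {m : ℕ} {H K : Type*}
  [NormedAddCommGroup H] [InnerProductSpace ℂ H] [CompleteSpace H]
  [NormedAddCommGroup K] [InnerProductSpace ℂ K] [CompleteSpace K]

local notation "⟪" x ", " y "⟫" => @inner ℂ _ _ x y

/-- intertwining passes to noncommProd -/
lemma comp_noncommProd (X : K →L[ℂ] H) (f : Fin m → (K →L[ℂ] K)) (g : Fin m → (H →L[ℂ] H))
    (hf : ∀ i j, Commute (f i) (f j)) (hg : ∀ i j, Commute (g i) (g j))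
    (hfg : ∀ ℓ, X.comp (f ℓ) = (g ℓ).comp X) (s : Finset (Fin m)) :
    X.comp (s.noncommProd f (fun i _ j _ _ => hf i j))
      = (s.noncommProd g (fun i _ j _ _ => hg i j)).comp X := by
  induction s using Finset.cons_induction with
  | empty => erw [Finset.noncommProd_empty, Finset.noncommProd_empty]; simp [one_def]
  | cons a s ha ih =>
      erw [Finset.noncommProd_cons, Finset.noncommProd_cons]; rw [mul_def, mul_def,
        ← ContinuousLinearMap.comp_assoc, hfg a, ContinuousLinearMap.comp_assoc, ih,
        ← ContinuousLinearMap.comp_assoc]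

lemma comp_pow (X : K →L[ℂ] H) (V : K →L[ℂ] K) (N : H →L[ℂ] H)
    (h : X.comp V = N.comp X) (k : ℕ) : X.comp (V ^ k) = (N ^ k).comp X := by
  induction k with
  | zero => simp [pow_zero, one_def]
  | succ k ih =>
      rw [pow_succ, pow_succ, mul_def, mul_def, ← ContinuousLinearMap.comp_assoc, ih,
        ContinuousLinearMap.comp_assoc, h, ← ContinuousLinearMap.comp_assoc]

lemma comp_tuplePow (X : K →L[ℂ] H) (V : Fin m → (K →L[ℂ] K)) (N : Fin m → (H →L[ℂ] H))
    (hV : ∀ i j, Commute (V i) (V j)) (hN : ∀ i j, Commute (N i) (N j))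
    (hmod : ∀ ℓ, X.comp (V ℓ) = (N ℓ).comp X) (α : Fin m → ℕ) :
    X.comp (tuplePow V hV α) = (tuplePow N hN α).comp X :=
  comp_noncommProd X _ _ (fun i j => (hV i j).pow_pow _ _) (fun i j => (hN i j).pow_pow _ _)
    (fun ℓ => comp_pow X (V ℓ) (N ℓ) (hmod ℓ) (α ℓ)) Finset.univ

lemma noncommProd_isometry (f : Fin m → (K →L[ℂ] K))
    (hf : ∀ i j, Commute (f i) (f j)) (hiso : ∀ ℓ x, ‖f ℓ x‖ = ‖x‖) (s : Finset (Fin m)) :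
    ∀ x, ‖s.noncommProd f (fun i _ j _ _ => hf i j) x‖ = ‖x‖ := by
  induction s using Finset.cons_induction with
  | empty => intro x; erw [Finset.noncommProd_empty]; simp
  | cons a s ha ih =>
      intro x
      erw [Finset.noncommProd_cons]; rw [ContinuousLinearMap.mul_apply, hiso a, ih]

lemma pow_isometry (V : K →L[ℂ] K) (hiso : ∀ x, ‖V x‖ = ‖x‖) (k : ℕ) :
    ∀ x, ‖(V ^ k) x‖ = ‖x‖ := by
  induction k with
  | zero => intro x; simp [pow_zero]
  | succ k ih =>
      intro x
      rw [pow_succ, ContinuousLinearMap.mul_apply, ih, hiso]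

lemma tuplePow_isometry (V : Fin m → (K →L[ℂ] K)) (hV : ∀ i j, Commute (V i) (V j))
    (hiso : ∀ ℓ x, ‖V ℓ x‖ = ‖x‖) (α : Fin m → ℕ) :
    ∀ x, ‖tuplePow V hV α x‖ = ‖x‖ :=
  noncommProd_isometry _ (fun i j => (hV i j).pow_pow _ _)
    (fun ℓ => pow_isometry (V ℓ) (hiso ℓ) (α ℓ)) Finset.univ

lemma inner_of_isometry (T : K →L[ℂ] K) (h : ∀ x, ‖T x‖ = ‖x‖) (x y : K) :
    ⟪T x, T y⟫ = ⟪x, y⟫ :=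
  (LinearIsometry.mk (T : K →ₗ[ℂ] K) h).inner_map_map x y

lemma commute_adjoint {a b : K →L[ℂ] K} (h : Commute a b) :
    Commute (adjoint a) (adjoint b) := by
  rw [← star_eq_adjoint, ← star_eq_adjoint]
  exact h.star_star

lemma adjoint_pow (a : K →L[ℂ] K) (k : ℕ) : adjoint (a ^ k) = (adjoint a) ^ k := by
  rw [← star_eq_adjoint, ← star_eq_adjoint, star_pow]

lemma adjoint_noncommProd (f : Fin m → (K →L[ℂ] K))
    (hf : ∀ i j, Commute (f i) (f j)) (s : Finset (Fin m)) :
    adjoint (s.noncommProd f (fun i _ j _ _ => hf i j))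
      = s.noncommProd (fun ℓ => adjoint (f ℓ)) (fun i _ j _ _ => commute_adjoint (hf i j)) := by
  induction s using Finset.cons_induction with
  | empty => erw [Finset.noncommProd_empty]; simp [← star_eq_adjoint]
  | cons a s ha ih =>
      erw [Finset.noncommProd_cons, Finset.noncommProd_cons]; rw [← star_eq_adjoint, star_mul,
        star_eq_adjoint, star_eq_adjoint, ← ih]
      have hc : Commute (f a) (s.noncommProd f (fun i _ j _ _ => hf i j)) :=
        Finset.noncommProd_commute s f _ (f a) (fun x _ => (hf a x))
      exact ((commute_adjoint hc).symm).eq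

end Aux

section Aux2

variable {m : ℕ} {H K : Type*}
  [NormedAddCommGroup H] [InnerProductSpace ℂ H] [CompleteSpace H]
  [NormedAddCommGroup K] [InnerProductSpace ℂ K] [CompleteSpace K]

local notation "⟪" x ", " y "⟫" => @inner ℂ _ _ x y

lemma adjoint_tuplePow (V : Fin m → (K →L[ℂ] K)) (hV : ∀ i j, Commute (V i) (V j))
    (α : Fin m → ℕ) :
    adjoint (tuplePow V hV α)
      = Finset.univ.noncommProd (fun ℓ => (adjoint (V ℓ)) ^ (α ℓ))
          (fun i _ j _ _ => (commute_adjoint (hV i j)).pow_pow (α i) (α j)) := by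
  unfold tuplePow
  rw [adjoint_noncommProd _ (fun i j => (hV i j).pow_pow (α i) (α j))]
  exact Finset.noncommProd_congr rfl (fun x _ => adjoint_pow (V x) (α x)) _

lemma tuplePow_add (V : Fin m → (K →L[ℂ] K)) (hV : ∀ i j, Commute (V i) (V j))
    (α β : Fin m → ℕ) :
    tuplePow V hV (α + β) = tuplePow V hV α * tuplePow V hV β := by
  unfold tuplePow
  exact (Finset.noncommProd_congr rfl
    (f := fun ℓ => V ℓ ^ (α + β) ℓ)
    (g := (fun ℓ => V ℓ ^ α ℓ) * fun ℓ => V ℓ ^ β ℓ)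
    (fun x _ => by simp [Pi.add_apply, pow_add])
    (fun i _ j _ _ => (hV i j).pow_pow ((α + β) i) ((α + β) j))).trans
    (Finset.noncommProd_mul_distrib _ _
      (fun i _ j _ _ => (hV i j).pow_pow (α i) (α j))
      (fun i _ j _ _ => (hV i j).pow_pow (β i) (β j))
      (fun i _ j _ _ => (hV i j).pow_pow (β i) (α j)))

lemma tuplePow_single (V : Fin m → (K →L[ℂ] K)) (hV : ∀ i j, Commute (V i) (V j))
    (ℓ : Fin m) : tuplePow V hV (Pi.single ℓ 1) = V ℓ := by
  classical
  unfold tuplePow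
  rw [Finset.noncommProd_congr (Finset.insert_erase (Finset.mem_univ ℓ)).symm
    (g := fun j => V j ^ (Pi.single ℓ 1 : Fin m → ℕ) j) (fun x _ => rfl)
    (fun i _ j _ hij => (hV i j).pow_pow _ _)]
  erw [Finset.noncommProd_insert_of_notMem _ _ _ _ (Finset.notMem_erase ℓ _)]
  erw [Finset.noncommProd_eq_pow_card _ _ _ 1
    (fun x hx => by
      rw [Pi.single_eq_of_ne (Finset.ne_of_mem_erase hx), pow_zero])]
  simp [Pi.single_eq_same]

/-- application form: `V ℓ` shifts the multi-index. -/
lemma tuplePow_shift (V : Fin m → (K →L[ℂ] K)) (hV : ∀ i j, Commute (V i) (V j))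
    (ℓ : Fin m) (α : Fin m → ℕ) (x : K) :
    V ℓ (tuplePow V hV α x) = tuplePow V hV (Pi.single ℓ 1 + α) x := by
  rw [tuplePow_add, tuplePow_single, ContinuousLinearMap.mul_apply]

lemma key_commute (V : Fin m → (K →L[ℂ] K)) (hV : ∀ i j, Commute (V i) (V j))
    (hdc : ∀ i j, i ≠ j → (adjoint (V i)).comp (V j) = (V j).comp (adjoint (V i)))
    (α β : Fin m → ℕ) (hdisj : ∀ ℓ, α ℓ = 0 ∨ β ℓ = 0) :
    Commute (adjoint (tuplePow V hV α)) (tuplePow V hV β) := by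
  rw [adjoint_tuplePow]
  unfold tuplePow
  have hel : ∀ i j, Commute ((adjoint (V i)) ^ (α i)) ((V j) ^ (β j)) := by
    intro i j
    by_cases hij : i = j
    · subst hij
      rcases hdisj i with h0 | h0 <;> rw [h0]
      · simpa [pow_zero] using Commute.one_left _
      · simpa [pow_zero] using Commute.one_right _
    · exact Commute.pow_pow (hdc i j hij) _ _
  refine Finset.noncommProd_commute _ _ _ _ (fun j _ => ?_)
  exact (Finset.noncommProd_commute _ _ _ _ (fun i _ => (hel i j).symm)).symm

end Aux2

section Key

variable {m : ℕ} {H K : Type*}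
  [NormedAddCommGroup H] [InnerProductSpace ℂ H] [CompleteSpace H]
  [NormedAddCommGroup K] [InnerProductSpace ℂ K] [CompleteSpace K]

local notation "⟪" x ", " y "⟫" => @inner ℂ _ _ x y

lemma adjoint_tuplePow_comp (X : K →L[ℂ] H) (V : Fin m → (K →L[ℂ] K))
    (N : Fin m → (H →L[ℂ] H))
    (hV : ∀ i j, Commute (V i) (V j)) (hN : ∀ i j, Commute (N i) (N j))
    (hmod : ∀ ℓ, X.comp (V ℓ) = (N ℓ).comp X) (α : Fin m → ℕ) (h : H) :
    adjoint (tuplePow V hV α) (adjoint X h)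
      = adjoint X (adjoint (tuplePow N hN α) h) := by
  have := congrArg ContinuousLinearMap.adjoint (comp_tuplePow X V N hV hN hmod α)
  rw [ContinuousLinearMap.adjoint_comp, ContinuousLinearMap.adjoint_comp] at this
  have h2 := ContinuousLinearMap.ext_iff.mp this h
  simpa using h2

lemma key_inner (N : Fin m → (H →L[ℂ] H)) (hN : ∀ i j, Commute (N i) (N j))
    (V : Fin m → (K →L[ℂ] K)) (hV : ∀ i j, Commute (V i) (V j))
    (hiso : ∀ ℓ x, ‖V ℓ x‖ = ‖x‖)
    (hdc : ∀ i j, i ≠ j → (adjoint (V i)).comp (V j) = (V j).comp (adjoint (V i)))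
    (X : K →L[ℂ] H)
    (hX : X.comp (adjoint X) = ContinuousLinearMap.id ℂ H)
    (hmod : ∀ ℓ, X.comp (V ℓ) = (N ℓ).comp X)
    (α β : Fin m → ℕ) (h g : H) :
    ⟪tuplePow V hV α (adjoint X h), tuplePow V hV β (adjoint X g)⟫
      = ⟪adjoint (tuplePow N hN (β - α)) h, adjoint (tuplePow N hN (α - β)) g⟫ := by
  have hα : α = (fun ℓ => min (α ℓ) (β ℓ)) + (α - β) := funext fun ℓ => by
    simp only [Pi.add_apply, Pi.sub_apply]; omega
  have hβ : β = (fun ℓ => min (α ℓ) (β ℓ)) + (β - α) := funext fun ℓ => by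
    simp only [Pi.add_apply, Pi.sub_apply]; omega
  have e1 : tuplePow V hV α
      = tuplePow V hV (fun ℓ => min (α ℓ) (β ℓ)) * tuplePow V hV (α - β) :=
    (congrArg (tuplePow V hV) hα).trans (tuplePow_add V hV _ _)
  have e2 : tuplePow V hV β
      = tuplePow V hV (fun ℓ => min (α ℓ) (β ℓ)) * tuplePow V hV (β - α) :=
    (congrArg (tuplePow V hV) hβ).trans (tuplePow_add V hV _ _)
  rw [e1, e2, ContinuousLinearMap.mul_apply, ContinuousLinearMap.mul_apply,
    inner_of_isometry _ (tuplePow_isometry V hV hiso _)]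
  rw [← ContinuousLinearMap.adjoint_inner_right (tuplePow V hV (α - β))]
  have hcomm := key_commute V hV hdc (α - β) (β - α)
    (fun ℓ => by simp only [Pi.sub_apply]; omega)
  rw [show adjoint (tuplePow V hV (α - β)) (tuplePow V hV (β - α) (adjoint X g))
      = tuplePow V hV (β - α) (adjoint (tuplePow V hV (α - β)) (adjoint X g)) from by
    have := congrFun (congrArg DFunLike.coe hcomm.eq) (adjoint X g)
    simpa [ContinuousLinearMap.mul_apply] using this]
  rw [← ContinuousLinearMap.adjoint_inner_left (tuplePow V hV (β - α))]
  rw [adjoint_tuplePow_comp X V N hV hN hmod, adjoint_tuplePow_comp X V N hV hN hmod]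
  rw [ContinuousLinearMap.adjoint_inner_left]
  have : X (adjoint X (adjoint (tuplePow N hN (α - β)) g))
      = adjoint (tuplePow N hN (α - β)) g := by
    have := congrFun (congrArg DFunLike.coe hX) (adjoint (tuplePow N hN (α - β)) g)
    simpa using this
  rw [this]

end Key

section Main

local notation "⟪" x ", " y "⟫" => @inner ℂ _ _ x y

/-- Uniqueness of the minimal isometric co-extension (Theorem 3.3): two minimal co-isometric
module maps `X₁, X₂` from spaces carrying doubly commuting tuples of isometries onto the same
commuting tuple `(H; N₁, …, N_m)` are unitarily equivalent via a unitary intertwining the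
isometry tuples. -/
theorem minimal_isometric_coextension_unique
    {m : ℕ} {H K₁ K₂ : Type*}
    [NormedAddCommGroup H] [InnerProductSpace ℂ H] [CompleteSpace H]
    [NormedAddCommGroup K₁] [InnerProductSpace ℂ K₁] [CompleteSpace K₁]
    [NormedAddCommGroup K₂] [InnerProductSpace ℂ K₂] [CompleteSpace K₂]
    (N : Fin m → (H →L[ℂ] H)) (hN : ∀ i j : Fin m, Commute (N i) (N j))
    (V₁ : Fin m → (K₁ →L[ℂ] K₁)) (V₂ : Fin m → (K₂ →L[ℂ] K₂))
    (hV₁iso : ∀ (ℓ : Fin m) (x : K₁), ‖V₁ ℓ x‖ = ‖x‖)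
    (hV₂iso : ∀ (ℓ : Fin m) (x : K₂), ‖V₂ ℓ x‖ = ‖x‖)
    (hV₁comm : ∀ i j : Fin m, Commute (V₁ i) (V₁ j))
    (hV₂comm : ∀ i j : Fin m, Commute (V₂ i) (V₂ j))
    (hV₁dc : ∀ i j : Fin m, i ≠ j →
      (ContinuousLinearMap.adjoint (V₁ i)).comp (V₁ j)
        = (V₁ j).comp (ContinuousLinearMap.adjoint (V₁ i)))
    (hV₂dc : ∀ i j : Fin m, i ≠ j →
      (ContinuousLinearMap.adjoint (V₂ i)).comp (V₂ j)
        = (V₂ j).comp (ContinuousLinearMap.adjoint (V₂ i)))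
    (X₁ : K₁ →L[ℂ] H) (X₂ : K₂ →L[ℂ] H)
    (hX₁ : X₁.comp (ContinuousLinearMap.adjoint X₁) = ContinuousLinearMap.id ℂ H)
    (hX₂ : X₂.comp (ContinuousLinearMap.adjoint X₂) = ContinuousLinearMap.id ℂ H)
    (hmod₁ : ∀ ℓ : Fin m, X₁.comp (V₁ ℓ) = (N ℓ).comp X₁)
    (hmod₂ : ∀ ℓ : Fin m, X₂.comp (V₂ ℓ) = (N ℓ).comp X₂)
    (hmin₁ : Dense (↑(Submodule.span ℂ
      {y : K₁ | ∃ (α : Fin m → ℕ) (h : H),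
        y = tuplePow V₁ hV₁comm α ((ContinuousLinearMap.adjoint X₁) h)}) : Set K₁))
    (hmin₂ : Dense (↑(Submodule.span ℂ
      {y : K₂ | ∃ (α : Fin m → ℕ) (h : H),
        y = tuplePow V₂ hV₂comm α ((ContinuousLinearMap.adjoint X₂) h)}) : Set K₂)) :
    ∃ U : K₁ ≃ₗᵢ[ℂ] K₂,
      (∀ (ℓ : Fin m) (x : K₁), U (V₁ ℓ x) = V₂ ℓ (U x)) ∧
      (∀ x : K₁, X₂ (U x) = X₁ x) := by
  classical
  set s₁ : (Fin m → ℕ) × H → K₁ :=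
    fun p => tuplePow V₁ hV₁comm p.1 (ContinuousLinearMap.adjoint X₁ p.2) with hs₁def
  set s₂ : (Fin m → ℕ) × H → K₂ :=
    fun p => tuplePow V₂ hV₂comm p.1 (ContinuousLinearMap.adjoint X₂ p.2) with hs₂def
  have hrange₁ : {y : K₁ | ∃ (α : Fin m → ℕ) (h : H),
      y = tuplePow V₁ hV₁comm α ((ContinuousLinearMap.adjoint X₁) h)} = Set.range s₁ := by
    ext y
    constructor
    · rintro ⟨α, h, rfl⟩; exact ⟨(α, h), rfl⟩
    · rintro ⟨⟨α, h⟩, rfl⟩; exact ⟨α, h, rfl⟩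
  have hrange₂ : {y : K₂ | ∃ (α : Fin m → ℕ) (h : H),
      y = tuplePow V₂ hV₂comm α ((ContinuousLinearMap.adjoint X₂) h)} = Set.range s₂ := by
    ext y
    constructor
    · rintro ⟨α, h, rfl⟩; exact ⟨(α, h), rfl⟩
    · rintro ⟨⟨α, h⟩, rfl⟩; exact ⟨α, h, rfl⟩
  -- pairwise inner products agree
  have hpair : ∀ p q : (Fin m → ℕ) × H, ⟪s₁ p, s₁ q⟫ = ⟪s₂ p, s₂ q⟫ := by
    intro p q
    rw [hs₁def, hs₂def]
    simp only
    rw [key_inner N hN V₁ hV₁comm hV₁iso hV₁dc X₁ hX₁ hmod₁ p.1 q.1 p.2 q.2,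
      key_inner N hN V₂ hV₂comm hV₂iso hV₂dc X₂ hX₂ hmod₂ p.1 q.1 p.2 q.2]
  set Φ : (((Fin m → ℕ) × H) →₀ ℂ) →ₗ[ℂ] K₁ := Finsupp.linearCombination ℂ s₁ with hΦdef
  set Ψ : (((Fin m → ℕ) × H) →₀ ℂ) →ₗ[ℂ] K₂ := Finsupp.linearCombination ℂ s₂ with hΨdef
  have hin₁ : ∀ c d, ⟪Φ c, Φ d⟫
      = ∑ i ∈ c.support, ∑ j ∈ d.support,
          (starRingEnd ℂ) (c i) * (d j) * ⟪s₁ i, s₁ j⟫ := by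
    intro c d
    rw [hΦdef]
    simp only [Finsupp.linearCombination_apply, Finsupp.sum]
    rw [sum_inner]
    refine Finset.sum_congr rfl fun i _ => ?_
    rw [inner_smul_left, inner_sum, Finset.mul_sum]
    refine Finset.sum_congr rfl fun j _ => ?_
    rw [inner_smul_right]; ring
  have hin₂ : ∀ c d, ⟪Ψ c, Ψ d⟫
      = ∑ i ∈ c.support, ∑ j ∈ d.support,
          (starRingEnd ℂ) (c i) * (d j) * ⟪s₂ i, s₂ j⟫ := by
    intro c d
    rw [hΨdef]
    simp only [Finsupp.linearCombination_apply, Finsupp.sum]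
    rw [sum_inner]
    refine Finset.sum_congr rfl fun i _ => ?_
    rw [inner_smul_left, inner_sum, Finset.mul_sum]
    refine Finset.sum_congr rfl fun j _ => ?_
    rw [inner_smul_right]; ring
  have hinner : ∀ c d, ⟪Φ c, Φ d⟫ = ⟪Ψ c, Ψ d⟫ := by
    intro c d
    rw [hin₁, hin₂]
    exact Finset.sum_congr rfl fun i _ => Finset.sum_congr rfl fun j _ => by
      rw [hpair i j]
  have hnorm : ∀ c, ‖Ψ c‖ = ‖Φ c‖ := by
    intro c
    rw [@norm_eq_sqrt_re_inner ℂ, @norm_eq_sqrt_re_inner ℂ, hinner]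
  have hker : LinearMap.ker Φ ≤ LinearMap.ker Ψ := by
    intro c hc
    rw [LinearMap.mem_ker] at hc ⊢
    have : ‖Ψ c‖ = 0 := by rw [hnorm, hc, norm_zero]
    exact norm_eq_zero.mp this
  set D : Submodule ℂ K₁ := LinearMap.range Φ with hDdef
  have hDset : (D : Set K₁) = ↑(Submodule.span ℂ (Set.range s₁)) := by
    rw [hDdef, hΦdef, Finsupp.range_linearCombination]
  have hD : Dense (D : Set K₁) := by
    rw [hDset]
    rw [hrange₁] at hmin₁
    exact hmin₁
  -- the densely defined unitary
  set g₀ : D →ₗ[ℂ] K₂ :=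
    (Submodule.liftQ (LinearMap.ker Φ) Ψ hker).comp
      ((LinearMap.quotKerEquivRange Φ).symm : D →ₗ[ℂ] _) with hg₀def
  have hg₀ : ∀ (c) (hc : Φ c ∈ D), g₀ ⟨Φ c, hc⟩ = Ψ c := by
    intro c hc
    have h1 : (LinearMap.quotKerEquivRange Φ).symm ⟨Φ c, hc⟩
        = Submodule.Quotient.mk c := by
      rw [LinearEquiv.symm_apply_eq]
      exact Subtype.ext (LinearMap.quotKerEquivRange_apply_mk Φ (x := c)).symm
    rw [hg₀def]
    simp only [LinearMap.coe_comp, Function.comp_apply, LinearEquiv.coe_coe, h1,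
      Submodule.liftQ_apply]
  have hg₀norm : ∀ x : D, ‖g₀ x‖ = ‖x‖ := by
    rintro ⟨y, hy⟩
    obtain ⟨c, rfl⟩ := hy
    rw [hg₀ c ⟨c, rfl⟩, hnorm c]
    rfl
  set g : D →L[ℂ] K₂ := g₀.mkContinuous 1 (fun x => by rw [hg₀norm x, one_mul]) with hgdef
  set e : D →L[ℂ] K₁ := D.subtypeL with hedef
  have h_e : IsUniformInducing (e : D → K₁) := isometry_subtype_coe.isUniformInducing
  have h_dense : DenseRange (e : D → K₁) := by
    have : Set.range (e : D → K₁) = (D : Set K₁) := Subtype.range_coe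
    rw [DenseRange, this]
    exact hD
  set Uc : K₁ →L[ℂ] K₂ := g.extend e with hUdef
  have hUΦ : ∀ c, Uc (Φ c) = Ψ c := by
    intro c
    have h1 := ContinuousLinearMap.extend_eq g h_dense h_e ⟨Φ c, ⟨c, rfl⟩⟩
    have h2 : (e ⟨Φ c, ⟨c, rfl⟩⟩ : K₁) = Φ c := rfl
    rw [h2] at h1
    rw [hUdef, h1, hgdef]
    rw [LinearMap.mkContinuous_apply, hg₀ c ⟨c, rfl⟩]
  have hUs : ∀ p, Uc (s₁ p) = s₂ p := by
    intro p
    have := hUΦ (Finsupp.single p 1)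
    simpa [hΦdef, hΨdef, Finsupp.linearCombination_single] using this
  have hUnorm : ∀ x : K₁, ‖Uc x‖ = ‖x‖ := by
    have heq : Set.EqOn (fun x => ‖Uc x‖) (fun x => ‖x‖) (D : Set K₁) := by
      rintro y ⟨c, rfl⟩
      simp only
      rw [hUΦ c, hnorm c]
    have hfun := Continuous.ext_on hD (by fun_prop) (by fun_prop) heq
    exact fun x => congrFun hfun x
  set U₀ : K₁ →ₗᵢ[ℂ] K₂ := ⟨(Uc : K₁ →ₗ[ℂ] K₂), hUnorm⟩ with hU₀def
  have hU₀app : ∀ x, U₀ x = Uc x := fun _ => rfl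
  have hclosed : IsClosed (Set.range U₀) := U₀.isometry.isClosedEmbedding.isClosed_range
  have hsurj : Function.Surjective U₀ := by
    have hsub : Submodule.span ℂ (Set.range s₂) ≤ LinearMap.range U₀.toLinearMap := by
      rw [Submodule.span_le]
      rintro y ⟨p, rfl⟩
      exact ⟨s₁ p, hUs p⟩
    intro y
    have hy : y ∈ closure (↑(Submodule.span ℂ (Set.range s₂)) : Set K₂) := by
      rw [hrange₂] at hmin₂
      rw [hmin₂.closure_eq]
      trivial
    have hy2 : y ∈ closure (Set.range U₀) := by
      refine closure_mono (fun z hz => ?_) hy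
      obtain ⟨w, hw⟩ := hsub hz
      exact ⟨w, hw⟩
    rwa [hclosed.closure_eq] at hy2
  have hUs' : ∀ (α : Fin m → ℕ) (h : H),
      Uc (tuplePow V₁ hV₁comm α (ContinuousLinearMap.adjoint X₁ h))
        = tuplePow V₂ hV₂comm α (ContinuousLinearMap.adjoint X₂ h) :=
    fun α h => hUs (α, h)
  refine ⟨LinearIsometryEquiv.ofSurjective U₀ hsurj, ?_, ?_⟩
  · intro ℓ x
    have hfun : Uc.comp (V₁ ℓ) = (V₂ ℓ).comp Uc := by
      apply ContinuousLinearMap.ext_on hmin₁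
      rintro y ⟨α, h, rfl⟩
      simp only [ContinuousLinearMap.comp_apply]
      calc Uc (V₁ ℓ (tuplePow V₁ hV₁comm α (ContinuousLinearMap.adjoint X₁ h)))
          = Uc (tuplePow V₁ hV₁comm (Pi.single ℓ 1 + α)
              (ContinuousLinearMap.adjoint X₁ h)) := by
            rw [tuplePow_shift]
        _ = tuplePow V₂ hV₂comm (Pi.single ℓ 1 + α)
              (ContinuousLinearMap.adjoint X₂ h) := hUs' _ h
        _ = V₂ ℓ (tuplePow V₂ hV₂comm α (ContinuousLinearMap.adjoint X₂ h)) :=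
            (tuplePow_shift V₂ hV₂comm ℓ α _).symm
        _ = V₂ ℓ (Uc (tuplePow V₁ hV₁comm α (ContinuousLinearMap.adjoint X₁ h))) := by
            rw [hUs' α h]
    have hx := ContinuousLinearMap.ext_iff.mp hfun x
    simp only [ContinuousLinearMap.comp_apply] at hx
    exact hx
  · intro x
    have hfun : X₂.comp Uc = X₁ := by
      apply ContinuousLinearMap.ext_on hmin₁
      rintro y ⟨α, h, rfl⟩
      simp only [ContinuousLinearMap.comp_apply]
      rw [hUs' α h]
      have c2 := ContinuousLinearMap.ext_iff.mp
        (comp_tuplePow X₂ V₂ N hV₂comm hN hmod₂ α) (ContinuousLinearMap.adjoint X₂ h)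
      have c1 := ContinuousLinearMap.ext_iff.mp
        (comp_tuplePow X₁ V₁ N hV₁comm hN hmod₁ α) (ContinuousLinearMap.adjoint X₁ h)
      simp only [ContinuousLinearMap.comp_apply] at c1 c2
      rw [c1, c2]
      have d2 : X₂ (ContinuousLinearMap.adjoint X₂ h) = h := by
        have := ContinuousLinearMap.ext_iff.mp hX₂ h
        simpa using this
      have d1 : X₁ (ContinuousLinearMap.adjoint X₁ h) = h := by
        have := ContinuousLinearMap.ext_iff.mp hX₁ h
        simpa using this
      rw [d1, d2]
    have hx := ContinuousLinearMap.ext_iff.mp hfun x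
    simp only [ContinuousLinearMap.comp_apply] at hx
    exact hx


end Main
end

section
/- (Section 4 computation.) The kernel (z, w) ↦ 2 − z · conj(w) on the open unit disc 𝔻 = {z ∈ ℂ : |z| < 1} is not nonnegative definite: there exist p ∈ ℕ, points w₁, …, w_p ∈ 𝔻 and scalars ζ₁, …, ζ_p ∈ ℂ such that Re ∑_{i,j=1}^p (2 − w_j · conj(w_i)) · ζ_i · conj(ζ_j) < 0. (This is the restriction to the diagonal of (1 − z₁conj(w₁))(1 − z₂conj(w₂)) K_S(z,w) for the module S of Section 4, and shows S admits no isometric co-extension to a vector-valued Hardy module over the bidisc.) -/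
/-- Section 4 computation: the kernel `(z, w) ↦ 2 − z conj w` on the open unit disc is not
nonnegative definite. -/
theorem two_sub_mul_conj_not_nnd :
    ∃ (p : ℕ) (w : Fin p → ℂ) (ζ : Fin p → ℂ),
      (∀ i, ‖w i‖ < 1) ∧
      (∑ i : Fin p, ∑ j : Fin p,
        (2 - w j * (starRingEnd ℂ) (w i)) * ζ i * (starRingEnd ℂ) (ζ j)).re < 0 := by
  refine ⟨2, ![0, (1:ℂ)/2], ![1, -1], ?_, ?_⟩
  · intro i
    fin_cases i <;> simp <;> norm_num
  · simp [Fin.sum_univ_two, Complex.ext_iff]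
end

section
/- (Corollary 5.2.) Let Ω = 𝔹^m = {z ∈ ℂ^m : ∑_{ℓ=1}^m |z_ℓ|² < 1} be the open Euclidean unit ball, let E₀ and H be complex Hilbert spaces, κ : 𝔹^m → (E₀ →L[ℂ] H) with {κ w x} of dense linear span in H and kernel K z w := (κ z)* ∘L (κ w), and let M₁, …, M_m be bounded operators on H with (M_ℓ)* (κ w x) = conj(w_ℓ) • (κ w x) for all w, x, ℓ. Then ∑_{ℓ=1}^m M_ℓ ∘ (M_ℓ)* ≤ id_H (i.e., ⟪∑_ℓ M_ℓ (M_ℓ)* f, f⟫ ≤ ‖f‖² for all f ∈ H) if and only if the kernel (z, w) ↦ (1 − ∑_{ℓ=1}^m z_ℓ · conj(w_ℓ)) • K z w is nonnegative definite on 𝔹^m. -/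
open scoped ComplexOrder

section Aux

variable {m : ℕ} {E₀ H : Type*}
    [NormedAddCommGroup E₀] [InnerProductSpace ℂ E₀] [CompleteSpace E₀]
    [NormedAddCommGroup H] [InnerProductSpace ℂ H] [CompleteSpace H]

/-- Every element of the span of the union of ranges of `κ w` is a finite sum
`∑ i, κ (w i) (ζ i)`. -/
lemma span_rep {Ω : Type*} (κ : Ω → (E₀ →L[ℂ] H)) (f : H)
    (hf : f ∈ Submodule.span ℂ (⋃ w : Ω, Set.range (κ w))) :
    ∃ (p : ℕ) (w : Fin p → Ω) (ζ : Fin p → E₀), f = ∑ i, κ (w i) (ζ i) := by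
  induction hf using Submodule.span_induction with
  | mem x h =>
    obtain ⟨_, ⟨w, rfl⟩, x, rfl⟩ := h
    exact ⟨1, fun _ => w, fun _ => x, by simp⟩
  | zero => exact ⟨0, Fin.elim0, Fin.elim0, by simp⟩
  | add x y hx hy ihx ihy =>
    obtain ⟨p, w, ζ, rfl⟩ := ihx
    obtain ⟨q, w', ζ', rfl⟩ := ihy
    refine ⟨p + q, Fin.append w w', Fin.append ζ ζ', ?_⟩
    rw [Fin.sum_univ_add]
    simp [Fin.append_left, Fin.append_right]
  | smul a x hx ihx =>
    obtain ⟨p, w, ζ, rfl⟩ := ihx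
    exact ⟨p, w, fun i => a • ζ i, by simp [Finset.smul_sum]⟩

/-- The key algebraic identity. -/
lemma key_identity
    (κ : {z : Fin m → ℂ | ∑ ℓ, ‖z ℓ‖ ^ 2 < 1} → (E₀ →L[ℂ] H))
    (K : {z : Fin m → ℂ | ∑ ℓ, ‖z ℓ‖ ^ 2 < 1} → {z : Fin m → ℂ | ∑ ℓ, ‖z ℓ‖ ^ 2 < 1} →
      (E₀ →L[ℂ] E₀))
    (hK : ∀ z w, K z w = (ContinuousLinearMap.adjoint (κ z)).comp (κ w))
    (M : Fin m → (H →L[ℂ] H))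
    (hM : ∀ (ℓ : Fin m) (w : {z : Fin m → ℂ | ∑ ℓ, ‖z ℓ‖ ^ 2 < 1}) (x : E₀),
      (ContinuousLinearMap.adjoint (M ℓ)) (κ w x)
        = (starRingEnd ℂ) ((w : Fin m → ℂ) ℓ) • κ w x)
    (p : ℕ) (w : Fin p → {z : Fin m → ℂ | ∑ ℓ, ‖z ℓ‖ ^ 2 < 1}) (ζ : Fin p → E₀) :
    ∑ i : Fin p, ∑ j : Fin p,
      (inner ℂ (((1 - ∑ ℓ : Fin m, (w j : Fin m → ℂ) ℓ *
          (starRingEnd ℂ) ((w i : Fin m → ℂ) ℓ)) • K (w j) (w i)) (ζ i)) (ζ j) : ℂ)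
      = ((‖∑ i, κ (w i) (ζ i)‖ ^ 2 : ℝ) : ℂ)
        - ∑ ℓ : Fin m,
            ((‖(ContinuousLinearMap.adjoint (M ℓ)) (∑ i, κ (w i) (ζ i))‖ ^ 2 : ℝ) : ℂ) := by
  set a : Fin p → H := fun i => κ (w i) (ζ i) with ha
  set f : H := ∑ i, a i with hf
  have hT : ∀ i j, (inner ℂ ((K (w j) (w i)) (ζ i)) (ζ j) : ℂ)
      = inner ℂ (a i) (a j) := by
    intro i j
    rw [hK]
    simp [ContinuousLinearMap.adjoint_inner_left, ha]
  have hnorm : ∀ x : H, ((‖x‖ ^ 2 : ℝ) : ℂ) = (inner ℂ x x : ℂ) := fun x => by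
    rw [inner_self_eq_norm_sq_to_K]; norm_cast
  -- norm of f
  have h1 : ((‖f‖ ^ 2 : ℝ) : ℂ) = ∑ i, ∑ j, (inner ℂ (a i) (a j) : ℂ) := by
    rw [hnorm, hf, sum_inner]
    exact Finset.sum_congr rfl fun i _ => by rw [inner_sum]
  -- adjoint applied to f
  have h2 : ∀ ℓ, (ContinuousLinearMap.adjoint (M ℓ)) f
      = ∑ i, (starRingEnd ℂ) ((w i : Fin m → ℂ) ℓ) • a i := by
    intro ℓ
    rw [hf, map_sum]
    exact Finset.sum_congr rfl fun i _ => hM ℓ (w i) (ζ i)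
  have h3 : ∀ ℓ, ((‖(ContinuousLinearMap.adjoint (M ℓ)) f‖ ^ 2 : ℝ) : ℂ)
      = ∑ i, ∑ j, ((w i : Fin m → ℂ) ℓ * (starRingEnd ℂ) ((w j : Fin m → ℂ) ℓ))
          * (inner ℂ (a i) (a j) : ℂ) := by
    intro ℓ
    rw [hnorm, h2, sum_inner]
    refine Finset.sum_congr rfl fun i _ => ?_
    rw [inner_sum]
    refine Finset.sum_congr rfl fun j _ => ?_
    rw [inner_smul_left, inner_smul_right]
    simp only [starRingEnd_apply, star_star]
    ring
  calc
    ∑ i : Fin p, ∑ j : Fin p,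
        (inner ℂ (((1 - ∑ ℓ : Fin m, (w j : Fin m → ℂ) ℓ *
            (starRingEnd ℂ) ((w i : Fin m → ℂ) ℓ)) • K (w j) (w i)) (ζ i)) (ζ j) : ℂ)
      = ∑ i, ∑ j, ((inner ℂ (a i) (a j) : ℂ)
          - ∑ ℓ, ((w i : Fin m → ℂ) ℓ * (starRingEnd ℂ) ((w j : Fin m → ℂ) ℓ))
              * (inner ℂ (a i) (a j) : ℂ)) := by
        refine Finset.sum_congr rfl fun i _ => Finset.sum_congr rfl fun j _ => ?_
        rw [ContinuousLinearMap.smul_apply, inner_smul_left, hT i j]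
        simp only [map_sub, map_one, map_sum, map_mul, starRingEnd_apply, star_star, sub_mul,
          one_mul, Finset.sum_mul]
        congr 1
        exact Finset.sum_congr rfl fun ℓ _ => by ring
    _ = (∑ i, ∑ j, (inner ℂ (a i) (a j) : ℂ))
        - ∑ ℓ, ∑ i, ∑ j, ((w i : Fin m → ℂ) ℓ * (starRingEnd ℂ) ((w j : Fin m → ℂ) ℓ))
            * (inner ℂ (a i) (a j) : ℂ) := by
        rw [Finset.sum_comm (γ := Fin m)]
        rw [← Finset.sum_sub_distrib]
        refine Finset.sum_congr rfl fun i _ => ?_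
        rw [Finset.sum_comm (γ := Fin m), ← Finset.sum_sub_distrib]
    _ = ((‖f‖ ^ 2 : ℝ) : ℂ)
        - ∑ ℓ : Fin m, ((‖(ContinuousLinearMap.adjoint (M ℓ)) f‖ ^ 2 : ℝ) : ℂ) := by
        rw [h1]
        congr 1
        exact Finset.sum_congr rfl fun ℓ _ => (h3 ℓ).symm

end Aux

/-- Corollary 5.2: for the coordinate multipliers `M₁, …, M_m` on a reproducing kernel
Hilbert space over the unit ball `𝔹^m`, the row contractivity condition
`∑ M_ℓ M_ℓ* ≤ I` holds if and only if `(z, w) ↦ (1 − ⟨z, w⟩) • K z w` is nonnegative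
definite. -/
theorem row_contractive_iff_drury_arveson_factor_nnd
    {m : ℕ} {E₀ H : Type*}
    [NormedAddCommGroup E₀] [InnerProductSpace ℂ E₀] [CompleteSpace E₀]
    [NormedAddCommGroup H] [InnerProductSpace ℂ H] [CompleteSpace H]
    (κ : {z : Fin m → ℂ | ∑ ℓ, ‖z ℓ‖ ^ 2 < 1} → (E₀ →L[ℂ] H))
    (hdense : Dense
      (↑(Submodule.span ℂ
        (⋃ w : {z : Fin m → ℂ | ∑ ℓ, ‖z ℓ‖ ^ 2 < 1}, Set.range (κ w))) : Set H))
    (K : {z : Fin m → ℂ | ∑ ℓ, ‖z ℓ‖ ^ 2 < 1} → {z : Fin m → ℂ | ∑ ℓ, ‖z ℓ‖ ^ 2 < 1} →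
      (E₀ →L[ℂ] E₀))
    (hK : ∀ z w, K z w = (ContinuousLinearMap.adjoint (κ z)).comp (κ w))
    (M : Fin m → (H →L[ℂ] H))
    (hM : ∀ (ℓ : Fin m) (w : {z : Fin m → ℂ | ∑ ℓ, ‖z ℓ‖ ^ 2 < 1}) (x : E₀),
      (ContinuousLinearMap.adjoint (M ℓ)) (κ w x)
        = (starRingEnd ℂ) ((w : Fin m → ℂ) ℓ) • κ w x) :
    (∀ f : H,
      (inner ℂ (∑ ℓ : Fin m, (M ℓ) ((ContinuousLinearMap.adjoint (M ℓ)) f)) f : ℂ)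
        ≤ ((‖f‖ ^ 2 : ℝ) : ℂ)) ↔
    IsNNDKernel (fun (z w : {z : Fin m → ℂ | ∑ ℓ, ‖z ℓ‖ ^ 2 < 1}) =>
      (1 - ∑ ℓ : Fin m, (z : Fin m → ℂ) ℓ * (starRingEnd ℂ) ((w : Fin m → ℂ) ℓ)) • K z w) := by
  -- rewrite the LHS as a real inequality
  have hinner : ∀ f : H,
      (inner ℂ (∑ ℓ : Fin m, (M ℓ) ((ContinuousLinearMap.adjoint (M ℓ)) f)) f : ℂ)
        = (((∑ ℓ : Fin m, ‖(ContinuousLinearMap.adjoint (M ℓ)) f‖ ^ 2 : ℝ)) : ℂ) := by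
    intro f
    rw [sum_inner]
    push_cast
    refine Finset.sum_congr rfl fun ℓ _ => ?_
    rw [← ContinuousLinearMap.adjoint_inner_right, inner_self_eq_norm_sq_to_K]
    norm_cast
  have hiff : (∀ f : H,
      (inner ℂ (∑ ℓ : Fin m, (M ℓ) ((ContinuousLinearMap.adjoint (M ℓ)) f)) f : ℂ)
        ≤ ((‖f‖ ^ 2 : ℝ) : ℂ)) ↔
      (∀ f : H, ∑ ℓ : Fin m, ‖(ContinuousLinearMap.adjoint (M ℓ)) f‖ ^ 2 ≤ ‖f‖ ^ 2) := by
    constructor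
    · intro h f
      have := h f
      rw [hinner] at this
      exact_mod_cast this
    · intro h f
      rw [hinner]
      exact_mod_cast h f
  rw [hiff]
  constructor
  · -- row contractivity ⇒ NND
    intro h p w ζ
    have hkey := key_identity κ K hK M hM p w ζ
    simp only []
    rw [hkey]
    have hr := h (∑ i, κ (w i) (ζ i))
    rw [show ((0 : ℂ)) = ((0 : ℝ) : ℂ) by norm_cast]
    rw [show (((‖∑ i, κ (w i) (ζ i)‖ ^ 2 : ℝ)) : ℂ)
          - ∑ ℓ : Fin m,
              ((‖(ContinuousLinearMap.adjoint (M ℓ)) (∑ i, κ (w i) (ζ i))‖ ^ 2 : ℝ) : ℂ)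
        = (((‖∑ i, κ (w i) (ζ i)‖ ^ 2
            - ∑ ℓ : Fin m, ‖(ContinuousLinearMap.adjoint (M ℓ)) (∑ i, κ (w i) (ζ i))‖ ^ 2 : ℝ))
            : ℂ) by push_cast; ring]
    rw [Complex.real_le_real]
    linarith
  · -- NND ⇒ row contractivity
    intro hnnd
    set C : Set H :=
      {f | ∑ ℓ : Fin m, ‖(ContinuousLinearMap.adjoint (M ℓ)) f‖ ^ 2 ≤ ‖f‖ ^ 2} with hC
    have hclosed : IsClosed C := by
      apply isClosed_le
      · exact continuous_finset_sum _ fun ℓ _ =>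
          (((ContinuousLinearMap.adjoint (M ℓ)).continuous.norm).pow 2)
      · exact continuous_norm.pow 2
    have hsub : (↑(Submodule.span ℂ
        (⋃ w : {z : Fin m → ℂ | ∑ ℓ, ‖z ℓ‖ ^ 2 < 1}, Set.range (κ w))) : Set H) ⊆ C := by
      intro f hf
      obtain ⟨p, w, ζ, rfl⟩ := span_rep κ f hf
      have hpos := hnnd p w ζ
      rw [key_identity κ K hK M hM p w ζ] at hpos
      rw [show (((‖∑ i, κ (w i) (ζ i)‖ ^ 2 : ℝ)) : ℂ)
            - ∑ ℓ : Fin m,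
                ((‖(ContinuousLinearMap.adjoint (M ℓ)) (∑ i, κ (w i) (ζ i))‖ ^ 2 : ℝ) : ℂ)
          = (((‖∑ i, κ (w i) (ζ i)‖ ^ 2
              - ∑ ℓ : Fin m, ‖(ContinuousLinearMap.adjoint (M ℓ)) (∑ i, κ (w i) (ζ i))‖ ^ 2 : ℝ))
              : ℂ) by push_cast; ring,
        show ((0 : ℂ)) = ((0 : ℝ) : ℂ) by norm_cast, Complex.real_le_real] at hpos
      simp only [hC, Set.mem_setOf_eq]
      linarith
    intro f
    have : f ∈ C := by
      have h1 : closure (↑(Submodule.span ℂ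
          (⋃ w : {z : Fin m → ℂ | ∑ ℓ, ‖z ℓ‖ ^ 2 < 1}, Set.range (κ w))) : Set H) ⊆ C :=
        hclosed.closure_subset_iff.mpr hsub
      exact h1 (hdense.closure_eq ▸ Set.mem_univ f)
    exact this
end

section
/- (Proposition 5.3, kernel form: Drury–Arveson co-extension.) Let Ω = 𝔹^m be the open Euclidean unit ball of ℂ^m, let E₀ and H be complex Hilbert spaces, κ : 𝔹^m → (E₀ →L[ℂ] H) with dense span and kernel K z w := (κ z)* ∘L (κ w), and let M₁, …, M_m be bounded operators on H with (M_ℓ)* (κ w x) = conj(w_ℓ) • (κ w x) for all w, x, ℓ. If ∑_{ℓ=1}^m M_ℓ ∘ (M_ℓ)* ≤ id_H, then there exist a complex Hilbert space E and a map π : 𝔹^m → (E →L[ℂ] E₀) such that (1 − ∑_{ℓ=1}^m z_ℓ · conj(w_ℓ)) • K z w = π z ∘L (π w)* for all z, w ∈ 𝔹^m; equivalently, K z w = (1 − ⟨z, w⟩)^{-1} • (π z ∘L (π w)*), so that K admits the Drury–Arveson kernel (1 − ⟨z,w⟩)^{-1} as a factor and H is realized as a quotient module of the E-valued Drury–Arveson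 module H²_m ⊗ E. -/
open ContinuousLinearMap in
private lemma aux_adjoint_comp_isometry_eq_one
    {H : Type*} {G : Type*}
    [NormedAddCommGroup H] [InnerProductSpace ℂ H] [CompleteSpace H]
    [NormedAddCommGroup G] [InnerProductSpace ℂ G] [CompleteSpace G]
    (ι : H →ₗᵢ[ℂ] G) :
    (ContinuousLinearMap.adjoint ι.toContinuousLinearMap).comp ι.toContinuousLinearMap = 1 := by
  ext x
  refine ext_inner_left ℂ fun y => ?_
  rw [ContinuousLinearMap.comp_apply, ContinuousLinearMap.adjoint_inner_right]
  simpa using ι.inner_map_map y x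

set_option maxHeartbeats 1000000 in

private noncomputable def auxIota (E₀ : Type u) (H : Type v)
    [NormedAddCommGroup E₀] [InnerProductSpace ℂ E₀]
    [NormedAddCommGroup H] [InnerProductSpace ℂ H] :
    H →ₗᵢ[ℂ] WithLp 2 (E₀ × H) where
  toLinearMap := (WithLp.linearEquiv 2 ℂ (E₀ × H)).symm.toLinearMap.comp (LinearMap.inr ℂ E₀ H)
  norm_map' x := by
    rw [norm_eq_sqrt_re_inner (𝕜 := ℂ), norm_eq_sqrt_re_inner (𝕜 := ℂ) x]
    congr 1
    simp [WithLp.prod_inner_apply]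

set_option maxHeartbeats 2000000 in
/-- Proposition 5.3, kernel form: if the coordinate multipliers on a reproducing kernel
Hilbert module over the unit ball `𝔹^m` satisfy the row contraction condition
`∑ M_ℓ M_ℓ* ≤ I`, then the kernel factors as
`(1 − ⟨z, w⟩) • K z w = π z ∘ (π w)*` through some Hilbert space `E`; that is, `K` admits
the Drury–Arveson kernel `(1 − ⟨z, w⟩)⁻¹` as a factor and `H` is a quotient module of the
`E`-valued Drury–Arveson module. -/
theorem drury_arveson_factorization_of_row_contraction
    {m : ℕ} {E₀ : Type u} {H : Type v}
    [NormedAddCommGroup E₀] [InnerProductSpace ℂ E₀] [CompleteSpace E₀]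
    [NormedAddCommGroup H] [InnerProductSpace ℂ H] [CompleteSpace H]
    (κ : {z : Fin m → ℂ | ∑ ℓ, ‖z ℓ‖ ^ 2 < 1} → (E₀ →L[ℂ] H))
    (hdense : Dense
      (↑(Submodule.span ℂ
        (⋃ w : {z : Fin m → ℂ | ∑ ℓ, ‖z ℓ‖ ^ 2 < 1}, Set.range (κ w))) : Set H))
    (K : {z : Fin m → ℂ | ∑ ℓ, ‖z ℓ‖ ^ 2 < 1} → {z : Fin m → ℂ | ∑ ℓ, ‖z ℓ‖ ^ 2 < 1} →
      (E₀ →L[ℂ] E₀))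
    (hK : ∀ z w, K z w = (ContinuousLinearMap.adjoint (κ z)).comp (κ w))
    (M : Fin m → (H →L[ℂ] H))
    (hM : ∀ (ℓ : Fin m) (w : {z : Fin m → ℂ | ∑ ℓ, ‖z ℓ‖ ^ 2 < 1}) (x : E₀),
      (ContinuousLinearMap.adjoint (M ℓ)) (κ w x)
        = (starRingEnd ℂ) ((w : Fin m → ℂ) ℓ) • κ w x)
    (hrow : ∀ f : H,
      (inner ℂ (∑ ℓ : Fin m, (M ℓ) ((ContinuousLinearMap.adjoint (M ℓ)) f)) f : ℂ).re
        ≤ ‖f‖ ^ 2) :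
    ∃ (E : Type (max u v)) (_ : NormedAddCommGroup E) (_ : InnerProductSpace ℂ E)
        (_ : CompleteSpace E) (π : {z : Fin m → ℂ | ∑ ℓ, ‖z ℓ‖ ^ 2 < 1} → (E →L[ℂ] E₀)),
      ∀ z w : {z : Fin m → ℂ | ∑ ℓ, ‖z ℓ‖ ^ 2 < 1},
        (1 - ∑ ℓ : Fin m, (z : Fin m → ℂ) ℓ * (starRingEnd ℂ) ((w : Fin m → ℂ) ℓ)) • K z w
          = (π z).comp (ContinuousLinearMap.adjoint (π w)) := by
  classical
  set D : H →L[ℂ] H := 1 - ∑ ℓ : Fin m, (M ℓ).comp (ContinuousLinearMap.adjoint (M ℓ)) with hD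
  -- D is positive
  have hsa : ∀ ℓ : Fin m, star ((M ℓ).comp (ContinuousLinearMap.adjoint (M ℓ)))
      = (M ℓ).comp (ContinuousLinearMap.adjoint (M ℓ)) := fun ℓ => by
    rw [← ContinuousLinearMap.star_eq_adjoint]
    exact IsSelfAdjoint.mul_star_self (M ℓ)
  have hDsa : IsSelfAdjoint D := by
    show star D = D
    rw [hD, star_sub, star_one, star_sum]
    congr 1
    exact Finset.sum_congr rfl fun ℓ _ => hsa ℓ
  have hDpos : (0 : H →L[ℂ] H) ≤ D := by
    rw [ContinuousLinearMap.nonneg_iff_isPositive, ContinuousLinearMap.isPositive_def']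
    refine ⟨hDsa, fun x => ?_⟩
    have hDx : D x = x - ∑ ℓ : Fin m, (M ℓ) ((ContinuousLinearMap.adjoint (M ℓ)) x) := by
      simp [hD]
    have hx := hrow x
    simp only [ContinuousLinearMap.reApplyInnerSelf, hDx, inner_sub_left, map_sub,
      RCLike.re_to_complex]
    have hxx : (inner ℂ x x : ℂ).re = ‖x‖ ^ 2 := by
      simpa using (inner_self_eq_norm_sq (𝕜 := ℂ) x)
    rw [hxx]
    linarith
  -- square root of D
  set S : H →L[ℂ] H := CFC.sqrt D with hS
  have hSpos : (0 : H →L[ℂ] H) ≤ S := CFC.sqrt_nonneg (a := D)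
  have hSsa : IsSelfAdjoint S := (ContinuousLinearMap.nonneg_iff_isPositive S).mp hSpos |>.isSelfAdjoint
  have hSS : S.comp S = D := CFC.sqrt_mul_sqrt_self D hDpos
  -- key identity: (κ z)* ∘ D ∘ κ w = (1 - ⟨z,w⟩) • K z w
  have hkey : ∀ z w, (ContinuousLinearMap.adjoint (κ z)).comp (D.comp (κ w))
      = (1 - ∑ ℓ : Fin m, (z : Fin m → ℂ) ℓ * (starRingEnd ℂ) ((w : Fin m → ℂ) ℓ)) • K z w := by
    intro z w
    have hadj : ∀ ℓ : Fin m, (ContinuousLinearMap.adjoint (κ z)).comp (M ℓ)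
        = (z : Fin m → ℂ) ℓ • ContinuousLinearMap.adjoint (κ z) := by
      intro ℓ
      have h1 : (ContinuousLinearMap.adjoint (M ℓ)).comp (κ z)
          = (starRingEnd ℂ) ((z : Fin m → ℂ) ℓ) • κ z := by
        ext x; simpa using hM ℓ z x
      calc (ContinuousLinearMap.adjoint (κ z)).comp (M ℓ)
          = ContinuousLinearMap.adjoint ((ContinuousLinearMap.adjoint (M ℓ)).comp (κ z)) := by
            rw [ContinuousLinearMap.adjoint_comp, ContinuousLinearMap.adjoint_adjoint]
        _ = (z : Fin m → ℂ) ℓ • ContinuousLinearMap.adjoint (κ z) := by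
            rw [h1, LinearIsometryEquiv.map_smulₛₗ]
            simp
    ext x
    simp only [ContinuousLinearMap.comp_apply, hD, ContinuousLinearMap.sub_apply,
      ContinuousLinearMap.one_apply, ContinuousLinearMap.sum_apply, map_sub, map_sum,
      ContinuousLinearMap.smul_apply, hK, sub_smul, one_smul]
    rw [Finset.sum_smul]
    congr 1
    refine Finset.sum_congr rfl fun ℓ _ => ?_
    have h2 := DFunLike.congr_fun (hadj ℓ) ((κ w) x)
    simp only [ContinuousLinearMap.comp_apply, ContinuousLinearMap.smul_apply] at h2
    rw [hM ℓ w x, map_smul, map_smul, h2, smul_smul, mul_comm]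
  -- the embedding H → WithLp 2 (E₀ × H)
  let ι : H →ₗᵢ[ℂ] WithLp 2 (E₀ × H) := auxIota E₀ H
  let P : WithLp 2 (E₀ × H) →L[ℂ] H := ContinuousLinearMap.adjoint ι.toContinuousLinearMap
  refine ⟨WithLp 2 (E₀ × H), inferInstance, inferInstance, inferInstance,
    fun z => (ContinuousLinearMap.adjoint (κ z)).comp (S.comp P), fun z w => ?_⟩
  rw [← hkey]
  have h1 : ContinuousLinearMap.adjoint ((ContinuousLinearMap.adjoint (κ w)).comp (S.comp P))
      = (ι.toContinuousLinearMap.comp S).comp (κ w) := by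
    rw [ContinuousLinearMap.adjoint_comp, ContinuousLinearMap.adjoint_comp, hSsa.adjoint_eq,
      ContinuousLinearMap.adjoint_adjoint, ContinuousLinearMap.adjoint_adjoint]
  have h2 : ∀ y : H, P (ι.toContinuousLinearMap y) = y := fun y =>
    DFunLike.congr_fun (aux_adjoint_comp_isometry_eq_one ι) y
  ext x
  have h3 := DFunLike.congr_fun hSS ((κ w) x)
  simp only [ContinuousLinearMap.comp_apply] at h3 ⊢
  rw [h1]
  simp only [ContinuousLinearMap.comp_apply]
  rw [h2, h3]
end

section
/- (Bergman-type positivity implies Hardy-type positivity.) Let E₀ be a complex Hilbert space and K : 𝔻^m → 𝔻^m → (E₀ →L[ℂ] E₀) a kernel on the open polydisc 𝔻^m = {z ∈ ℂ^m : |z_ℓ| < 1 for all ℓ}. If the kernel (z, w) ↦ (∏_{ℓ=1}^m (1 − z_ℓ · conj(w_ℓ))²) • K z w is nonnegative definite on 𝔻^m, then the kernel (z, w) ↦ (∏_{ℓ=1}^m (1 − z_ℓ · conj(w_ℓ))) • K z w is also nonnegative definite on 𝔻^m. (Hence if a reproducing kernel Hilbert module over the polydisc admits an isometric co-extension to a vector-valued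 Bergman module, it also admits one to a vector-valued Hardy module.) -/
open scoped ComplexOrder

/-- Multiplying an nnd kernel by a Szegő-type factor preserves nnd-ness. -/
lemma szego_smul_nnd {Ω E₀ : Type*} [NormedAddCommGroup E₀] [InnerProductSpace ℂ E₀]
    (G : Ω → Ω → (E₀ →L[ℂ] E₀)) (hG : IsNNDKernel G)
    (f : Ω → ℂ) (hf : ∀ z, ‖f z‖ < 1) :
    IsNNDKernel (fun z w => (1 - f z * (starRingEnd ℂ) (f w))⁻¹ • G z w) := by
  intro p w ζ
  set y : Fin p → Fin p → ℂ := fun i j => f (w i) * (starRingEnd ℂ) (f (w j)) with hy_def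
  set B : Fin p → Fin p → ℂ := fun i j => (inner ℂ (G (w j) (w i) (ζ i)) (ζ j) : ℂ) with hB_def
  have hy : ∀ i j, ‖y i j‖ < 1 := by
    intro i j
    have h1 := hf (w i); have h2 := hf (w j)
    have hn1 : (0:ℝ) ≤ ‖f (w i)‖ := norm_nonneg _
    have hn2 : (0:ℝ) ≤ ‖f (w j)‖ := norm_nonneg _
    rw [hy_def]; simp only [norm_mul, RCLike.norm_conj]
    nlinarith
  have hA : ∀ n : ℕ, (0:ℂ) ≤ ∑ i, ∑ j, (y i j) ^ n * B i j := by
    intro n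
    have h := hG p w (fun i => ((starRingEnd ℂ) (f (w i))) ^ n • ζ i)
    calc (0:ℂ) ≤ ∑ i, ∑ j, (inner ℂ (G (w j) (w i)
          (((starRingEnd ℂ) (f (w i))) ^ n • ζ i))
          (((starRingEnd ℂ) (f (w j))) ^ n • ζ j) : ℂ) := h
      _ = ∑ i, ∑ j, (y i j) ^ n * B i j := by
          refine Finset.sum_congr rfl fun i _ => Finset.sum_congr rfl fun j _ => ?_
          rw [map_smul, inner_smul_left, inner_smul_right, hy_def, hB_def]
          simp only [map_pow, Complex.conj_conj, mul_pow]
          ring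
  have hsum : ∀ i j : Fin p, Summable (fun n : ℕ => (y i j) ^ n * B i j) :=
    fun i j => (summable_geometric_of_norm_lt_one (hy i j)).mul_right _
  have hswap : ∑' n : ℕ, ∑ i, ∑ j, (y i j) ^ n * B i j
      = ∑ i, ∑ j, (1 - y i j)⁻¹ * B i j := by
    rw [Summable.tsum_finsetSum (fun i _ => summable_sum (fun j _ => hsum i j))]
    refine Finset.sum_congr rfl fun i _ => ?_
    rw [Summable.tsum_finsetSum (fun j _ => hsum i j)]
    refine Finset.sum_congr rfl fun j _ => ?_
    rw [tsum_mul_right, tsum_geometric_of_norm_lt_one (hy i j)]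
  have hpos : (0:ℂ) ≤ ∑ i, ∑ j, (1 - y i j)⁻¹ * B i j := by
    rw [← hswap]; exact tsum_nonneg hA
  calc (0:ℂ) ≤ ∑ i, ∑ j, (1 - y i j)⁻¹ * B i j := hpos
    _ = ∑ i, ∑ j, (inner ℂ (((1 - f (w j) * (starRingEnd ℂ) (f (w i)))⁻¹ • G (w j) (w i))
          (ζ i)) (ζ j) : ℂ) := by
        refine Finset.sum_congr rfl fun i _ => Finset.sum_congr rfl fun j _ => ?_
        rw [ContinuousLinearMap.smul_apply, inner_smul_left, hy_def, hB_def]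
        congr 1
        rw [map_inv₀, map_sub, map_one, map_mul, Complex.conj_conj]
        ring_nf

/-- Bergman-type positivity implies Hardy-type positivity on the polydisc: if
`(z, w) ↦ (∏_ℓ (1 − z_ℓ conj (w_ℓ))²) • K z w` is nonnegative definite on `𝔻^m`, then so is
`(z, w) ↦ (∏_ℓ (1 − z_ℓ conj (w_ℓ))) • K z w`. -/
theorem hardy_factor_nnd_of_bergman_factor_nnd
    {m : ℕ} {E₀ : Type*} [NormedAddCommGroup E₀] [InnerProductSpace ℂ E₀] [CompleteSpace E₀]
    (K : {z : Fin m → ℂ | ∀ ℓ, ‖z ℓ‖ < 1} → {z : Fin m → ℂ | ∀ ℓ, ‖z ℓ‖ < 1} →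
      (E₀ →L[ℂ] E₀))
    (hBergman : IsNNDKernel (fun (z w : {z : Fin m → ℂ | ∀ ℓ, ‖z ℓ‖ < 1}) =>
      (∏ ℓ : Fin m, (1 - (z : Fin m → ℂ) ℓ * (starRingEnd ℂ) ((w : Fin m → ℂ) ℓ)) ^ 2)
        • K z w)) :
    IsNNDKernel (fun (z w : {z : Fin m → ℂ | ∀ ℓ, ‖z ℓ‖ < 1}) =>
      (∏ ℓ : Fin m, (1 - (z : Fin m → ℂ) ℓ * (starRingEnd ℂ) ((w : Fin m → ℂ) ℓ)))
        • K z w) := by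
  have hne : ∀ (z w : {z : Fin m → ℂ | ∀ ℓ, ‖z ℓ‖ < 1}) (ℓ : Fin m),
      (1 - (z : Fin m → ℂ) ℓ * (starRingEnd ℂ) ((w : Fin m → ℂ) ℓ)) ≠ 0 := by
    intro z w ℓ h
    have hz := z.2 ℓ; have hw := w.2 ℓ
    have h1 : (z : Fin m → ℂ) ℓ * (starRingEnd ℂ) ((w : Fin m → ℂ) ℓ) = 1 := by
      linear_combination -h
    have : ‖(z : Fin m → ℂ) ℓ * (starRingEnd ℂ) ((w : Fin m → ℂ) ℓ)‖ < 1 := by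
      rw [norm_mul, RCLike.norm_conj]
      have hn1 : (0:ℝ) ≤ ‖(z : Fin m → ℂ) ℓ‖ := norm_nonneg _
      have hn2 : (0:ℝ) ≤ ‖(w : Fin m → ℂ) ℓ‖ := norm_nonneg _
      nlinarith
    rw [h1] at this; simp at this
  have key : ∀ s : Finset (Fin m), IsNNDKernel (fun (z w : {z : Fin m → ℂ | ∀ ℓ, ‖z ℓ‖ < 1}) =>
      ((∏ ℓ ∈ s, (1 - (z : Fin m → ℂ) ℓ * (starRingEnd ℂ) ((w : Fin m → ℂ) ℓ))⁻¹) *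
        ∏ ℓ : Fin m, (1 - (z : Fin m → ℂ) ℓ * (starRingEnd ℂ) ((w : Fin m → ℂ) ℓ)) ^ 2)
        • K z w) := by
    intro s
    induction s using Finset.induction_on with
    | empty => simpa using hBergman
    | @insert a s ha ih =>
      have heq : (fun (z w : {z : Fin m → ℂ | ∀ ℓ, ‖z ℓ‖ < 1}) =>
          ((∏ ℓ ∈ insert a s, (1 - (z : Fin m → ℂ) ℓ * (starRingEnd ℂ) ((w : Fin m → ℂ) ℓ))⁻¹) *
            ∏ ℓ : Fin m, (1 - (z : Fin m → ℂ) ℓ * (starRingEnd ℂ) ((w : Fin m → ℂ) ℓ)) ^ 2)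
            • K z w)
          = (fun (z w : {z : Fin m → ℂ | ∀ ℓ, ‖z ℓ‖ < 1}) =>
          (1 - (z : Fin m → ℂ) a * (starRingEnd ℂ) ((w : Fin m → ℂ) a))⁻¹ •
          (((∏ ℓ ∈ s, (1 - (z : Fin m → ℂ) ℓ * (starRingEnd ℂ) ((w : Fin m → ℂ) ℓ))⁻¹) *
            ∏ ℓ : Fin m, (1 - (z : Fin m → ℂ) ℓ * (starRingEnd ℂ) ((w : Fin m → ℂ) ℓ)) ^ 2)
            • K z w)) := by
        funext z w
        rw [Finset.prod_insert ha, smul_smul, mul_assoc]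
      rw [heq]
      exact szego_smul_nnd _ ih (fun z => (z : Fin m → ℂ) a) (fun z => z.2 a)
  have hfin := key Finset.univ
  have heq2 : (fun (z w : {z : Fin m → ℂ | ∀ ℓ, ‖z ℓ‖ < 1}) =>
      ((∏ ℓ : Fin m, (1 - (z : Fin m → ℂ) ℓ * (starRingEnd ℂ) ((w : Fin m → ℂ) ℓ))⁻¹) *
        ∏ ℓ : Fin m, (1 - (z : Fin m → ℂ) ℓ * (starRingEnd ℂ) ((w : Fin m → ℂ) ℓ)) ^ 2)
        • K z w)
      = (fun (z w : {z : Fin m → ℂ | ∀ ℓ, ‖z ℓ‖ < 1}) =>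
      (∏ ℓ : Fin m, (1 - (z : Fin m → ℂ) ℓ * (starRingEnd ℂ) ((w : Fin m → ℂ) ℓ)))
        • K z w) := by
    funext z w
    congr 1
    rw [← Finset.prod_mul_distrib]
    refine Finset.prod_congr rfl fun ℓ _ => ?_
    field_simp [hne z w ℓ]
  rw [← heq2]
  exact hfin
end
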